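/- arXiv:0903.0474 — 5 statements merged into one kernel-verified Lean document; each statement's English description precedes it below -/
import Mathlib

section
/- Let r : ℤ → ℝ be even with ∑_{k∈ℤ}(1+|k|)|r(k)| < ∞ and f(ω) = (2π)^{-1}∑_{k∈ℤ} r(k)e^{-ιkω}. Let {a_{k,n} : 1 ≤ k ≤ n−1}, n ≥ 2, be a triangular array of real weights with sup_n max_{1≤k≤n−1} |a_{k,n}| < ∞ and sup_n ∑_{k=2}^{n−1} |a_{k,n} − a_{k−1,n}| < ∞. Define A_n = ∑_{k=1}^{n−1} a_{k,n}²(1 − k/n)², H_n(ω) = ∑_{k=1}^{n−1} a_{k,n}(1 − k/n)e^{-ιkω}, and K_n(ω) = H_n(ω)H_n(−ω)/(2πA_n). If A_n → ∞ as n → ∞, then lim_{n→∞} ∫_{−π}^{π} K_n(ω) f(ω)² dω = f(0)². -/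
open Complex Real Filter

/-- The spectral density `f(ω) = (2π)⁻¹ ∑_{k∈ℤ} r(k) e^{-ιkω}`, which is real-valued when `r`
is even; we take the real part of the (real) complex series. -/
noncomputable def specDensity (r : ℤ → ℝ) (ω : ℝ) : ℝ :=
  ((2 * (Real.pi : ℂ))⁻¹ *
    ∑' k : ℤ, (r k : ℂ) * Complex.exp (-(Complex.I * (k : ℂ) * (ω : ℂ)))).re

/-- The smoothing window `H_n(ω) = ∑_{k=1}^{n-1} a_k (1 - k/n) e^{-ικω}` of a weight array. -/
noncomputable def smoothWindow (n : ℕ) (a : ℕ → ℝ) (ω : ℝ) : ℂ :=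
  ∑ k ∈ Finset.Icc 1 (n - 1),
    ((a k * (1 - (k : ℝ) / (n : ℝ)) : ℝ) : ℂ) * Complex.exp (-(Complex.I * (k : ℂ) * (ω : ℂ)))

/-- The normalizer `A_n = ∑_{k=1}^{n-1} a_{k,n}² (1 - k/n)²`. -/
noncomputable def normalizerA (n : ℕ) (a : ℕ → ℝ) : ℝ :=
  ∑ k ∈ Finset.Icc 1 (n - 1), (a k) ^ 2 * (1 - (k : ℝ) / (n : ℝ)) ^ 2

/-- The (real-valued) kernel `K_n(ω) = H_n(ω) H_n(-ω) / (2π A_n)`. -/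
noncomputable def kernelK (n : ℕ) (a : ℕ → ℝ) (ω : ℝ) : ℝ :=
  (smoothWindow n a ω * smoothWindow n a (-ω)).re / (2 * Real.pi * normalizerA n a)



lemma continuous_specDensity {r : ℤ → ℝ}
    (hA1 : Summable fun k : ℤ => (1 + |(k : ℝ)|) * |r k|) :
    Continuous (specDensity r) := by
  have hs : Summable fun k : ℤ => |r k| := by
    refine hA1.of_nonneg_of_le (fun k => abs_nonneg _) fun k => ?_
    nlinarith [abs_nonneg (r k), abs_nonneg ((k : ℝ))]
  have h : Continuous fun ω : ℝ =>
      ∑' k : ℤ, (r k : ℂ) * Complex.exp (-(Complex.I * (k : ℂ) * (ω : ℂ))) := by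
    refine continuous_tsum (fun k => ?_) hs (fun k ω => ?_)
    · exact continuous_const.mul (Complex.continuous_exp.comp (by continuity))
    · rw [norm_mul, Complex.norm_exp]
      simp
  exact Complex.continuous_re.comp (continuous_const.mul h)

lemma cexp_int_integral (m : ℤ) :
    (∫ ω in (-Real.pi)..Real.pi, Complex.exp (Complex.I * (m : ℂ) * (ω : ℂ)))
      = if m = 0 then (2 * (Real.pi : ℂ)) else 0 := by
  rcases eq_or_ne m 0 with h | h
  · simp [h, two_mul]
  · have hc : Complex.I * (m : ℂ) ≠ 0 := by
      simp [Complex.I_ne_zero, Complex.ext_iff, h]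
    rw [if_neg h]
    have : (∫ ω in (-Real.pi)..Real.pi,
        Complex.exp ((Complex.I * (m : ℂ)) * (ω : ℂ))) =
        (Complex.exp ((Complex.I * m) * (Real.pi : ℂ)) -
         Complex.exp ((Complex.I * m) * ((-Real.pi : ℝ) : ℂ))) / (Complex.I * m) :=
      integral_exp_mul_complex hc
    rw [this]
    have hper : Complex.exp ((Complex.I * m) * (Real.pi : ℂ))
        = Complex.exp ((Complex.I * m) * ((-Real.pi : ℝ) : ℂ)) := by
      rw [show (Complex.I * m) * (Real.pi : ℂ)
          = (Complex.I * m) * ((-Real.pi : ℝ) : ℂ) + (m : ℂ) * (2 * (Real.pi : ℂ) * Complex.I) by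
        push_cast; ring]
      rw [Complex.exp_add, Complex.exp_int_mul_two_pi_mul_I, mul_one]
    rw [hper, sub_self, zero_div]

lemma normSq_one_sub_exp (ω : ℝ) :
    Complex.normSq (1 - Complex.exp (-(Complex.I * (ω : ℂ)))) = 2 - 2 * Real.cos ω := by
  have : Complex.exp (-(Complex.I * (ω : ℂ))) = Complex.exp (((-ω : ℝ) : ℂ) * Complex.I) := by
    push_cast; ring_nf
  rw [this, Complex.exp_mul_I]
  simp [Complex.normSq_apply, Complex.cos_ofReal_re, Complex.sin_ofReal_re,
    Complex.cos_ofReal_im, Complex.sin_ofReal_im]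
  nlinarith [Real.sin_sq_add_cos_sq ω]



lemma continuous_smoothWindow (n : ℕ) (a : ℕ → ℝ) : Continuous (smoothWindow n a) := by
  unfold smoothWindow
  exact continuous_finset_sum _ fun k _ =>
    continuous_const.mul (Complex.continuous_exp.comp (by continuity))

lemma smoothWindow_neg (n : ℕ) (a : ℕ → ℝ) (ω : ℝ) :
    smoothWindow n a (-ω) = (starRingEnd ℂ) (smoothWindow n a ω) := by
  unfold smoothWindow
  rw [map_sum]
  refine Finset.sum_congr rfl fun k _ => ?_
  rw [map_mul, Complex.conj_ofReal, ← Complex.exp_conj]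
  congr 1
  simp [Complex.ext_iff]

lemma kernel_num_eq (n : ℕ) (a : ℕ → ℝ) (ω : ℝ) :
    (smoothWindow n a ω * smoothWindow n a (-ω)).re
      = ‖smoothWindow n a ω‖ ^ 2 := by
  rw [smoothWindow_neg, Complex.mul_conj, ← Complex.normSq_eq_norm_sq]
  simp

lemma kernelK_nonneg (n : ℕ) (a : ℕ → ℝ) (hA : 0 ≤ normalizerA n a) (ω : ℝ) :
    0 ≤ kernelK n a ω := by
  rw [kernelK, kernel_num_eq]
  have : 0 ≤ 2 * Real.pi * normalizerA n a := by positivity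
  positivity

lemma continuous_kernelK (n : ℕ) (a : ℕ → ℝ) : Continuous (kernelK n a) := by
  unfold kernelK
  exact (Complex.continuous_re.comp ((continuous_smoothWindow n a).mul
    ((continuous_smoothWindow n a).comp continuous_neg))).div_const _



lemma integral_window_mul (n : ℕ) (a : ℕ → ℝ) :
    (∫ ω in (-Real.pi)..Real.pi, smoothWindow n a ω * smoothWindow n a (-ω))
      = ((2 * Real.pi * normalizerA n a : ℝ) : ℂ) := by
  set c : ℕ → ℂ := fun k => ((a k * (1 - (k : ℝ) / (n : ℝ)) : ℝ) : ℂ) with hc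
  have key : ∀ ω : ℝ, smoothWindow n a ω * smoothWindow n a (-ω) =
      ∑ j ∈ Finset.Icc 1 (n-1), ∑ k ∈ Finset.Icc 1 (n-1),
        (c j * c k) * Complex.exp (Complex.I * (((k : ℤ) - (j : ℤ) : ℤ) : ℂ) * (ω : ℂ)) := by
    intro ω
    rw [smoothWindow, smoothWindow, Finset.sum_mul_sum]
    refine Finset.sum_congr rfl fun j _ => Finset.sum_congr rfl fun k _ => ?_
    rw [mul_mul_mul_comm, ← Complex.exp_add]
    congr 1
    push_cast
    ring
  have hcont : ∀ (z : ℂ) (m : ℤ),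
      IntervalIntegrable (fun ω : ℝ => z * Complex.exp (Complex.I * (m : ℂ) * (ω : ℂ)))
        MeasureTheory.volume (-Real.pi) Real.pi :=
    fun z m => (continuous_const.mul (Complex.continuous_exp.comp
      (by continuity))).intervalIntegrable _ _
  simp only [key]
  rw [intervalIntegral.integral_finset_sum
    (f := fun j ω => ∑ k ∈ Finset.Icc 1 (n-1),
      (c j * c k) * Complex.exp (Complex.I * (((k : ℤ) - (j : ℤ) : ℤ) : ℂ) * (ω : ℂ)))
    (fun j _ => (continuous_finset_sum _ fun k _ =>
      continuous_const.mul (Complex.continuous_exp.comp (by continuity))).intervalIntegrable _ _)]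
  have hinner : ∀ j ∈ Finset.Icc 1 (n-1),
      (∫ ω in (-Real.pi)..Real.pi, ∑ k ∈ Finset.Icc 1 (n-1),
        (c j * c k) * Complex.exp (Complex.I * (((k : ℤ) - (j : ℤ) : ℤ) : ℂ) * (ω : ℂ)))
      = c j * c j * (2 * (Real.pi : ℂ)) := by
    intro j hj
    rw [intervalIntegral.integral_finset_sum
      (f := fun k ω => (c j * c k) * Complex.exp (Complex.I * (((k : ℤ) - (j : ℤ) : ℤ) : ℂ) * (ω : ℂ)))
      (fun k _ => hcont (c j * c k) ((k:ℤ)-(j:ℤ)))]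
    have hterm : ∀ k ∈ Finset.Icc 1 (n-1),
        (∫ ω in (-Real.pi)..Real.pi,
          (c j * c k) * Complex.exp (Complex.I * (((k : ℤ) - (j : ℤ) : ℤ) : ℂ) * (ω : ℂ)))
        = if k = j then c j * c j * (2 * (Real.pi : ℂ)) else 0 := by
      intro k _
      rw [intervalIntegral.integral_const_mul, cexp_int_integral]
      by_cases h : k = j
      · simp [h]
      · have hne : ((k : ℤ) - (j : ℤ)) ≠ 0 := sub_ne_zero.mpr (by exact_mod_cast h)
        simp [h, hne]
    rw [Finset.sum_congr rfl hterm, Finset.sum_ite_eq' (Finset.Icc 1 (n-1)) j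
      (fun _ => c j * c j * (2 * (Real.pi : ℂ))), if_pos hj]
  rw [Finset.sum_congr rfl hinner]
  simp only [hc, normalizerA]
  push_cast
  rw [Finset.mul_sum]
  exact Finset.sum_congr rfl fun j _ => by ring

lemma integral_kernel_num (n : ℕ) (a : ℕ → ℝ) :
    (∫ ω in (-Real.pi)..Real.pi, (smoothWindow n a ω * smoothWindow n a (-ω)).re)
      = 2 * Real.pi * normalizerA n a := by
  have hcw : Continuous (smoothWindow n a) := by
    unfold smoothWindow
    exact continuous_finset_sum _ fun k _ =>
      continuous_const.mul (Complex.continuous_exp.comp (by continuity))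
  have hi : IntervalIntegrable (fun ω : ℝ => smoothWindow n a ω * smoothWindow n a (-ω))
      MeasureTheory.volume (-Real.pi) Real.pi :=
    (hcw.mul (hcw.comp continuous_neg)).intervalIntegrable _ _
  have h := Complex.reCLM.intervalIntegral_comp_comm hi
  simp only [Complex.reCLM_apply] at h
  rw [h, integral_window_mul]
  simp

lemma integral_kernelK (n : ℕ) (a : ℕ → ℝ) (hA : normalizerA n a ≠ 0) :
    (∫ ω in (-Real.pi)..Real.pi, kernelK n a ω) = 1 := by
  unfold kernelK
  rw [intervalIntegral.integral_div, integral_kernel_num]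
  have h2 : 2 * Real.pi * normalizerA n a ≠ 0 := by
    have := Real.pi_ne_zero
    positivity
  field_simp

lemma window_norm_bound (n : ℕ) (a : ℕ → ℝ) (M V : ℝ) (hM0 : 0 ≤ M) (hV0 : 0 ≤ V)
    (hM : ∀ k, k ≤ n - 1 → |a k| ≤ M)
    (hV : (∑ k ∈ Finset.Icc 2 (n - 1), |a k - a (k - 1)|) ≤ V)
    {ω : ℝ} {cl : ℝ} (hcl : 0 < cl)
    (hz : cl ≤ ‖1 - Complex.exp (-(Complex.I * (ω : ℂ)))‖) :
    ‖smoothWindow n a ω‖ ≤ (V + 2 * M) * (2 / cl) := by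
  rcases le_or_gt n 1 with hn | hn
  · have : n - 1 = 0 := by omega
    rw [smoothWindow, this]
    simp
    positivity
  obtain ⟨m, rfl⟩ : ∃ m, n = 2 + m := ⟨n - 2, by omega⟩
  set z : ℂ := Complex.exp (-(Complex.I * (ω : ℂ))) with hzdef
  have habsz : ‖z‖ = 1 := by
    rw [hzdef, Complex.norm_exp]
    simp
  have hz1 : z ≠ 1 := by
    intro h
    rw [h, sub_self] at hz
    simp at hz
    exact absurd hz (not_le.mpr hcl)
  -- geometric sum bound
  have hG : ∀ N : ℕ, ‖∑ j ∈ Finset.range N, z ^ (j + 1)‖ ≤ 2 / cl := by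
    intro N
    have : (∑ j ∈ Finset.range N, z ^ (j + 1)) = z * ((z ^ N - 1) / (z - 1)) := by
      rw [← geom_sum_eq hz1, Finset.mul_sum]
      exact Finset.sum_congr rfl fun j _ => by ring
    rw [this, norm_mul, habsz, one_mul, norm_div]
    have h1 : ‖z ^ N - 1‖ ≤ 2 := by
      calc ‖z ^ N - 1‖ ≤ ‖z ^ N‖ + ‖(1:ℂ)‖ :=
        (norm_sub_le _ _)
      _ = 2 := by rw [norm_pow, habsz, one_pow, norm_one]; norm_num
    have h2 : cl ≤ ‖z - 1‖ := by
      rwa [norm_sub_rev]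
    exact div_le_div₀ (by norm_num) h1 hcl h2
  -- reindex the window sum
  set b : ℕ → ℂ := fun i => ((a (1 + i) * (1 - ((1 + i : ℕ) : ℝ) / ((2 + m : ℕ) : ℝ)) : ℝ) : ℂ)
    with hbdef
  have hw : smoothWindow (2 + m) a ω = ∑ i ∈ Finset.range (m + 1), b i * z ^ (i + 1) := by
    rw [smoothWindow, show (2 + m) - 1 = m + 1 from by omega,
      show Finset.Icc 1 (m + 1) = Finset.Ico 1 (m + 2) from by rw [← Finset.Ico_add_one_right_eq_Icc]; rfl,
      Finset.sum_Ico_eq_sum_range]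
    refine Finset.sum_congr (by norm_num) fun i _ => ?_
    congr 1
    rw [hzdef, ← Complex.exp_nat_mul]
    congr 1
    push_cast
    ring
  -- Abel summation
  have habel : (∑ i ∈ Finset.range (m + 1), b i * z ^ (i + 1))
      = b m * (∑ j ∈ Finset.range (m + 1), z ^ (j + 1))
        - ∑ i ∈ Finset.range m, (b (i + 1) - b i) * (∑ j ∈ Finset.range (i + 1), z ^ (j + 1)) := by
    have := Finset.sum_range_by_parts b (fun j => z ^ (j + 1)) (m + 1)
    simpa [smul_eq_mul] using this
  rw [hw, habel]
  -- bounds on coefficients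
  have hbm : ‖b m‖ ≤ M := by
    rw [hbdef]
    simp only [Complex.norm_real, Real.norm_eq_abs]
    rw [abs_mul]
    have h1 : |a (1 + m)| ≤ M := hM _ (by omega)
    have h2 : |1 - ((1 + m : ℕ) : ℝ) / ((2 + m : ℕ) : ℝ)| ≤ 1 := by
      rw [abs_le]
      constructor
      · have : ((1 + m : ℕ) : ℝ) / ((2 + m : ℕ) : ℝ) ≤ 1 := by
          apply div_le_one_of_le₀ <;> push_cast <;> [linarith; positivity]
        linarith
      · have : 0 ≤ ((1 + m : ℕ) : ℝ) / ((2 + m : ℕ) : ℝ) := by positivity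
        linarith
    calc |a (1 + m)| * |1 - ((1 + m : ℕ) : ℝ) / ((2 + m : ℕ) : ℝ)| ≤ M * 1 :=
      mul_le_mul h1 h2 (abs_nonneg _) hM0
    _ = M := mul_one M
  have hbdiff : ∑ i ∈ Finset.range m, ‖b (i + 1) - b i‖ ≤ V + M := by
    have hpt : ∀ i ∈ Finset.range m, ‖b (i + 1) - b i‖
        ≤ |a (2 + i) - a (1 + i)| + M / ((2 + m : ℕ) : ℝ) := by
      intro i hi
      have him : i < m := Finset.mem_range.mp hi
      rw [hbdef]
      simp only
      rw [← Complex.ofReal_sub, Complex.norm_real, Real.norm_eq_abs]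
      have hNpos : (0 : ℝ) < ((2 + m : ℕ) : ℝ) := by positivity
      have heq : a (1 + (i + 1)) * (1 - ((1 + (i + 1) : ℕ) : ℝ) / ((2 + m : ℕ) : ℝ))
          - a (1 + i) * (1 - ((1 + i : ℕ) : ℝ) / ((2 + m : ℕ) : ℝ))
          = (a (2 + i) - a (1 + i)) * (1 - ((2 + i : ℕ) : ℝ) / ((2 + m : ℕ) : ℝ))
            - a (1 + i) * (1 / ((2 + m : ℕ) : ℝ)) := by
        rw [show 1 + (i + 1) = 2 + i from by omega]
        push_cast
        field_simp
        ring
      rw [heq]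
      have ht : |1 - ((2 + i : ℕ) : ℝ) / ((2 + m : ℕ) : ℝ)| ≤ 1 := by
        rw [abs_le]
        have h0 : (0:ℝ) ≤ ((2 + i : ℕ) : ℝ) / ((2 + m : ℕ) : ℝ) := by positivity
        have h1 : ((2 + i : ℕ) : ℝ) / ((2 + m : ℕ) : ℝ) ≤ 1 := by
          refine div_le_one_of_le₀ ?_ (by positivity)
          exact_mod_cast (by omega : (2 + i) ≤ (2 + m))
        constructor <;> linarith
      calc |(a (2 + i) - a (1 + i)) * (1 - ((2 + i : ℕ) : ℝ) / ((2 + m : ℕ) : ℝ))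
            - a (1 + i) * (1 / ((2 + m : ℕ) : ℝ))|
          ≤ |(a (2 + i) - a (1 + i)) * (1 - ((2 + i : ℕ) : ℝ) / ((2 + m : ℕ) : ℝ))|
            + |a (1 + i) * (1 / ((2 + m : ℕ) : ℝ))| := abs_sub _ _
        _ ≤ |a (2 + i) - a (1 + i)| * 1 + M * (1 / ((2 + m : ℕ) : ℝ)) := by
            rw [abs_mul, abs_mul,
              _root_.abs_of_nonneg (by positivity : (0:ℝ) ≤ 1 / ((2 + m : ℕ) : ℝ))]
            exact add_le_add (mul_le_mul_of_nonneg_left ht (abs_nonneg _))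
              (mul_le_mul_of_nonneg_right (hM _ (by omega)) (by positivity))
        _ = |a (2 + i) - a (1 + i)| + M / ((2 + m : ℕ) : ℝ) := by ring
    calc ∑ i ∈ Finset.range m, ‖b (i + 1) - b i‖
        ≤ ∑ i ∈ Finset.range m, (|a (2 + i) - a (1 + i)| + M / ((2 + m : ℕ) : ℝ)) :=
          Finset.sum_le_sum hpt
      _ = (∑ i ∈ Finset.range m, |a (2 + i) - a (1 + i)|)
            + m * (M / ((2 + m : ℕ) : ℝ)) := by
          rw [Finset.sum_add_distrib, Finset.sum_const, Finset.card_range, nsmul_eq_mul]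
      _ ≤ V + M := by
          gcongr
          · -- variation sum
            have : (∑ i ∈ Finset.range m, |a (2 + i) - a (1 + i)|)
                = ∑ k ∈ Finset.Icc 2 ((2 + m) - 1), |a k - a (k - 1)| := by
              rw [show (2 + m) - 1 = m + 1 from by omega,
                show Finset.Icc 2 (m + 1) = Finset.Ico 2 (m + 2) from by rw [← Finset.Ico_add_one_right_eq_Icc]; rfl,
                Finset.sum_Ico_eq_sum_range]
              refine Finset.sum_congr (by norm_num) fun i _ => ?_
              rw [show 2 + i - 1 = 1 + i from by omega]
            rw [this]
            exact hV
          · -- m * (M/(2+m)) ≤ M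
            have hNpos : (0 : ℝ) < ((2 + m : ℕ) : ℝ) := by positivity
            have hm1 : (m : ℝ) / ((2 + m : ℕ) : ℝ) ≤ 1 := by
              rw [div_le_one hNpos]
              push_cast
              linarith
            calc (m : ℝ) * (M / ((2 + m : ℕ) : ℝ))
                = ((m : ℝ) / ((2 + m : ℕ) : ℝ)) * M := by ring
              _ ≤ 1 * M := mul_le_mul_of_nonneg_right hm1 hM0
              _ = M := one_mul M
  -- assemble
  calc ‖b m * (∑ j ∈ Finset.range (m + 1), z ^ (j + 1))
        - ∑ i ∈ Finset.range m, (b (i + 1) - b i) * (∑ j ∈ Finset.range (i + 1), z ^ (j + 1))‖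
      ≤ ‖b m * (∑ j ∈ Finset.range (m + 1), z ^ (j + 1))‖
        + ‖∑ i ∈ Finset.range m,
            (b (i + 1) - b i) * (∑ j ∈ Finset.range (i + 1), z ^ (j + 1))‖ :=
        norm_sub_le _ _
    _ ≤ M * (2 / cl) + (V + M) * (2 / cl) := by
        gcongr ?_ + ?_
        · rw [norm_mul]
          exact mul_le_mul hbm (hG _) (norm_nonneg _) hM0
        · calc ‖∑ i ∈ Finset.range m,
                (b (i + 1) - b i) * (∑ j ∈ Finset.range (i + 1), z ^ (j + 1))‖
              ≤ ∑ i ∈ Finset.range m, ‖(b (i + 1) - b i) * (∑ j ∈ Finset.range (i + 1), z ^ (j + 1))‖ :=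
                norm_sum_le _ _
            _ ≤ ∑ i ∈ Finset.range m, ‖b (i + 1) - b i‖ * (2 / cl) := by
                refine Finset.sum_le_sum fun i _ => ?_
                rw [norm_mul]
                exact mul_le_mul_of_nonneg_left (hG _) (norm_nonneg _)
            _ = (∑ i ∈ Finset.range m, ‖b (i + 1) - b i‖) * (2 / cl) := by
                rw [← Finset.sum_mul]
            _ ≤ (V + M) * (2 / cl) :=
                mul_le_mul_of_nonneg_right hbdiff (by positivity)
    _ = (V + 2 * M) * (2 / cl) := by ring

/-- for even `r` satisfying A.1, and a triangular weight array `a_{k,n}` that is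
uniformly bounded and of uniformly bounded variation, with `A_n → ∞`, one has
`∫_{-π}^{π} K_n(ω) f(ω)² dω → f(0)²`. -/
theorem kernel_smoothed_spectral_limit (r : ℤ → ℝ) (heven : ∀ k : ℤ, r (-k) = r k)
    (hA1 : Summable fun k : ℤ => (1 + |(k : ℝ)|) * |r k|)
    (a : ℕ → ℕ → ℝ)
    (hbdd : ∃ M : ℝ, ∀ n : ℕ, ∀ k : ℕ, k ≤ n - 1 → |a n k| ≤ M)
    (hvar : ∃ V : ℝ, ∀ n : ℕ, (∑ k ∈ Finset.Icc 2 (n - 1), |a n k - a n (k - 1)|) ≤ V)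
    (hAn : Tendsto (fun n : ℕ => normalizerA n (a n)) atTop atTop) :
    Tendsto (fun n : ℕ =>
        ∫ ω in (-Real.pi)..Real.pi, kernelK n (a n) ω * (specDensity r ω) ^ 2)
      atTop (nhds ((specDensity r 0) ^ 2)) := by
  classical
  obtain ⟨M, hM⟩ := hbdd
  obtain ⟨V, hV⟩ := hvar
  have hM0 : 0 ≤ M := le_trans (abs_nonneg _) (hM 0 0 (by omega))
  have hV0 : 0 ≤ V := le_trans (Finset.sum_nonneg fun k _ => abs_nonneg _) (hV 3)
  set g : ℝ → ℝ := fun ω => (specDensity r ω) ^ 2 with hgdef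
  have hgc : Continuous g := (continuous_specDensity hA1).pow 2
  obtain ⟨C, hC⟩ : ∃ C, ∀ ω ∈ Set.Icc (-Real.pi) Real.pi, |g ω| ≤ C := by
    obtain ⟨C, hC⟩ := (isCompact_Icc (a := -Real.pi) (b := Real.pi)).exists_bound_of_continuousOn
      hgc.continuousOn
    exact ⟨C, fun ω h => by simpa [Real.norm_eq_abs] using hC ω h⟩
  have hπ := Real.pi_pos
  have hC0 : 0 ≤ C :=
    le_trans (abs_nonneg _) (hC 0 ⟨by linarith, by linarith⟩)
  rw [Metric.tendsto_atTop]
  intro ε hε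
  obtain ⟨δ₀, hδ₀pos, hδ₀⟩ := Metric.continuousAt_iff.mp hgc.continuousAt (ε/2) (by linarith)
  set δ : ℝ := min (δ₀/2) Real.pi with hδdef
  have hδpos : 0 < δ := lt_min (by linarith) hπ
  have hδπ : δ ≤ Real.pi := min_le_right _ _
  have hδclose : ∀ ω ∈ Set.Icc (-δ) δ, |g ω - g 0| ≤ ε/2 := by
    intro ω hω
    have hd : dist ω 0 < δ₀ := by
      rw [Real.dist_eq, sub_zero]
      calc |ω| ≤ δ := abs_le.mpr ⟨hω.1, hω.2⟩
        _ ≤ δ₀/2 := min_le_left _ _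
        _ < δ₀ := by linarith
    have := hδ₀ hd
    rw [Real.dist_eq] at this
    linarith
  -- lower bound for |1 - e^{-iω}| on the tails
  set cδ : ℝ := Real.sqrt (2 - 2 * Real.cos δ) with hcδdef
  have hcosδ : Real.cos δ < 1 := by
    have := Real.cos_lt_cos_of_nonneg_of_le_pi (le_refl 0) hδπ hδpos
    rwa [Real.cos_zero] at this
  have hcδpos : 0 < cδ := Real.sqrt_pos.mpr (by linarith)
  set W : ℝ := (V + 2 * M) * (2 / cδ) with hWdef
  have hW0 : 0 ≤ W := by positivity
  set d : ℝ := 2 * C * W ^ 2 with hddef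
  have hd0 : 0 ≤ d := by positivity
  obtain ⟨N, hN⟩ := Filter.eventually_atTop.mp
    (hAn.eventually_ge_atTop (max 1 (2 * d / ε + 1)))
  refine ⟨N, fun n hn => ?_⟩
  have hA1' : (1 : ℝ) ≤ normalizerA n (a n) := le_trans (le_max_left _ _) (hN n hn)
  have hA2 : 2 * d / ε + 1 ≤ normalizerA n (a n) := le_trans (le_max_right _ _) (hN n hn)
  set A := normalizerA n (a n) with hAdef
  have hApos : 0 < A := lt_of_lt_of_le one_pos hA1'
  set K := kernelK n (a n) with hKdef
  have hKc : Continuous K := continuous_kernelK n (a n)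
  have hKnn : ∀ ω, 0 ≤ K ω := kernelK_nonneg n (a n) (le_of_lt hApos)
  have hK1 : (∫ ω in (-Real.pi)..Real.pi, K ω) = 1 := integral_kernelK n (a n) (ne_of_gt hApos)
  -- pointwise tail bound on the kernel
  set Q : ℝ := W ^ 2 / (2 * Real.pi * A) * (2 * C) with hQdef
  have hQ0 : 0 ≤ Q := by positivity
  have htail : ∀ ω ∈ Set.Icc (-Real.pi) Real.pi, δ ≤ |ω| → K ω ≤ W ^ 2 / (2 * Real.pi * A) := by
    intro ω hω hδω
    have hcos : Real.cos ω ≤ Real.cos δ := by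
      rw [← Real.cos_abs ω]
      exact Real.cos_le_cos_of_nonneg_of_le_pi (le_of_lt hδpos)
        (abs_le.mpr ⟨hω.1, hω.2⟩) hδω
    have hzb : cδ ≤ ‖1 - Complex.exp (-(Complex.I * (ω : ℂ)))‖ := by
      rw [Complex.norm_def, normSq_one_sub_exp]
      exact Real.sqrt_le_sqrt (by linarith)
    have hH := window_norm_bound n (a n) M V hM0 hV0 (fun k hk => hM n k hk) (hV n)
      hcδpos hzb
    rw [hKdef, kernelK, kernel_num_eq, ← hAdef]
    have hle : ‖smoothWindow n (a n) ω‖ ^ 2 ≤ W ^ 2 :=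
      pow_le_pow_left₀ (norm_nonneg _) hH 2
    exact (div_le_div_iff_of_pos_right (by positivity)).mpr hle
  -- integrability facts
  set h : ℝ → ℝ := fun ω => |g ω - g 0| with hhdef
  have hhc : Continuous h := (hgc.sub continuous_const).abs
  have hKh : Continuous fun ω => K ω * h ω := hKc.mul hhc
  have hiKh : ∀ u v : ℝ, IntervalIntegrable (fun ω => K ω * h ω) MeasureTheory.volume u v :=
    fun u v => hKh.intervalIntegrable u v
  have hiK : ∀ u v : ℝ, IntervalIntegrable K MeasureTheory.volume u v :=
    fun u v => hKc.intervalIntegrable u v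
  -- step 1: rewrite the difference as an integral against (g - g 0)
  have hstep1 : (∫ ω in (-Real.pi)..Real.pi, K ω * g ω) - g 0
      = ∫ ω in (-Real.pi)..Real.pi, K ω * (g ω - g 0) := by
    have e1 : (∫ ω in (-Real.pi)..Real.pi, K ω * (g ω - g 0))
        = (∫ ω in (-Real.pi)..Real.pi, K ω * g ω)
          - ∫ ω in (-Real.pi)..Real.pi, K ω * g 0 := by
      rw [← intervalIntegral.integral_sub (f := fun ω => K ω * g ω) (g := fun ω => K ω * g 0) ((hKc.mul hgc).intervalIntegrable _ _)
        ((hKc.mul continuous_const).intervalIntegrable _ _)]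
      congr 1
      funext ω
      ring
    rw [e1, intervalIntegral.integral_mul_const, hK1, one_mul]
  -- step 2 : |∫ K (g - g0)| ≤ ∫ K h
  have hstep2 : |∫ ω in (-Real.pi)..Real.pi, K ω * (g ω - g 0)|
      ≤ ∫ ω in (-Real.pi)..Real.pi, K ω * h ω := by
    calc |∫ ω in (-Real.pi)..Real.pi, K ω * (g ω - g 0)|
        ≤ ∫ ω in (-Real.pi)..Real.pi, |K ω * (g ω - g 0)| :=
          intervalIntegral.abs_integral_le_integral_abs (by linarith)
      _ = ∫ ω in (-Real.pi)..Real.pi, K ω * h ω := by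
          congr 1
          funext ω
          rw [abs_mul, _root_.abs_of_nonneg (hKnn ω)]
  -- step 3 : split the integral
  have hsplit : (∫ ω in (-Real.pi)..Real.pi, K ω * h ω)
      = (∫ ω in (-Real.pi)..(-δ), K ω * h ω) + (∫ ω in (-δ)..δ, K ω * h ω)
        + ∫ ω in δ..Real.pi, K ω * h ω := by
    rw [intervalIntegral.integral_add_adjacent_intervals (hiKh _ _) (hiKh _ _),
      intervalIntegral.integral_add_adjacent_intervals (hiKh _ _) (hiKh _ _)]
  -- tail bounds
  have htail_bound : ∀ u v : ℝ, -Real.pi ≤ u → u ≤ v → v ≤ Real.pi →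
      (∀ ω ∈ Set.Icc u v, δ ≤ |ω|) →
      (∫ ω in u..v, K ω * h ω) ≤ (v - u) * Q := by
    intro u v hu huv hv hδuv
    have : (∫ ω in u..v, K ω * h ω) ≤ ∫ _ in u..v, Q := by
      refine intervalIntegral.integral_mono_on huv (hiKh u v)
        (intervalIntegrable_const) fun ω hω => ?_
      have hω' : ω ∈ Set.Icc (-Real.pi) Real.pi := ⟨le_trans hu hω.1, le_trans hω.2 hv⟩
      have h2C : h ω ≤ 2 * C := by
        rw [hhdef]
        calc |g ω - g 0| ≤ |g ω| + |g 0| := abs_sub _ _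
          _ ≤ C + C := add_le_add (hC ω hω') (hC 0 ⟨by linarith, by linarith⟩)
          _ = 2 * C := by ring
      calc K ω * h ω ≤ (W ^ 2 / (2 * Real.pi * A)) * (2 * C) :=
            mul_le_mul (htail ω hω' (hδuv ω hω)) h2C
              (by rw [hhdef]; exact abs_nonneg _) (by positivity)
        _ = Q := rfl
    calc (∫ ω in u..v, K ω * h ω) ≤ ∫ _ in u..v, Q := this
      _ = (v - u) * Q := by rw [intervalIntegral.integral_const, smul_eq_mul]
  have hleft : (∫ ω in (-Real.pi)..(-δ), K ω * h ω) ≤ Real.pi * Q := by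
    have hb := htail_bound (-Real.pi) (-δ) (le_refl _) (by linarith) (by linarith)
      (fun ω hω => le_abs.mpr (Or.inr (by linarith [hω.2])))
    calc (∫ ω in (-Real.pi)..(-δ), K ω * h ω) ≤ (-δ - -Real.pi) * Q := hb
      _ ≤ Real.pi * Q := mul_le_mul_of_nonneg_right (by linarith) hQ0
  have hright : (∫ ω in δ..Real.pi, K ω * h ω) ≤ Real.pi * Q := by
    have hb := htail_bound δ Real.pi (by linarith) (by linarith) (le_refl _)
      (fun ω hω => le_abs.mpr (Or.inl hω.1))
    calc (∫ ω in δ..Real.pi, K ω * h ω) ≤ (Real.pi - δ) * Q := hb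
      _ ≤ Real.pi * Q := mul_le_mul_of_nonneg_right (by linarith) hQ0
  have hmid : (∫ ω in (-δ)..δ, K ω * h ω) ≤ ε / 2 := by
    have h1 : (∫ ω in (-δ)..δ, K ω * h ω) ≤ ∫ ω in (-δ)..δ, K ω * (ε / 2) := by
      refine intervalIntegral.integral_mono_on (by linarith) (hiKh _ _)
        ((hKc.mul continuous_const).intervalIntegrable _ _) fun ω hω => ?_
      exact mul_le_mul_of_nonneg_left (hδclose ω hω) (hKnn ω)
    have h3 : (∫ ω in (-δ)..δ, K ω) ≤ 1 := by
      rw [← hK1]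
      exact intervalIntegral.integral_mono_interval (by linarith) (by linarith) (by linarith)
        (MeasureTheory.ae_of_all _ hKnn) (hiK _ _)
    calc (∫ ω in (-δ)..δ, K ω * h ω) ≤ ∫ ω in (-δ)..δ, K ω * (ε / 2) := h1
      _ = (∫ ω in (-δ)..δ, K ω) * (ε / 2) := intervalIntegral.integral_mul_const _ _
      _ ≤ 1 * (ε / 2) := mul_le_mul_of_nonneg_right h3 (by linarith)
      _ = ε / 2 := one_mul _
  -- combine
  have hQd : Real.pi * Q + Real.pi * Q = d / A := by
    rw [hQdef, hddef]
    field_simp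
    ring
  have hdA : d / A < ε / 2 := by
    rw [div_lt_iff₀ hApos]
    have h1 : ε * (2 * d / ε + 1) ≤ ε * A := mul_le_mul_of_nonneg_left hA2 (le_of_lt hε)
    have h2 : ε * (2 * d / ε + 1) = 2 * d + ε := by field_simp
    nlinarith
  have hfinal : dist (∫ ω in (-Real.pi)..Real.pi, K ω * g ω) (g 0) < ε := by
    rw [Real.dist_eq, hstep1]
    calc |∫ ω in (-Real.pi)..Real.pi, K ω * (g ω - g 0)|
        ≤ ∫ ω in (-Real.pi)..Real.pi, K ω * h ω := hstep2
      _ = (∫ ω in (-Real.pi)..(-δ), K ω * h ω) + (∫ ω in (-δ)..δ, K ω * h ω)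
            + ∫ ω in δ..Real.pi, K ω * h ω := hsplit
      _ ≤ Real.pi * Q + ε / 2 + Real.pi * Q :=
          add_le_add (add_le_add hleft hmid) hright
      _ < ε := by
          have : Real.pi * Q + Real.pi * Q < ε / 2 := lt_of_le_of_lt (le_of_eq hQd) hdA
          linarith
  exact hfinal
end

section
/- For every M > 0 and V > 0 there exists a constant C > 0 such that: for all n ≥ 2, all real weights a_1,…,a_{n−1} with max_{1≤k≤n−1}|a_k| ≤ M and ∑_{k=2}^{n−1}|a_k − a_{k−1}| ≤ V, and all ω with |ω| ≤ π, one has |∑_{k=1}^{n−1} a_k (1 − k/n) e^{-ιkω}| ≤ C·L_{0,n}(ω). -/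
open Complex Real

lemma abs_exp_mul_I_sub_one (ω : ℝ) :
    ‖Complex.exp (↑ω * I) - 1‖ = 2 * |Real.sin (ω/2)| := by
  have h : Complex.exp (↑ω * I) - 1
      = Complex.exp (↑(ω/2) * I) * (2 * I * Complex.sin (↑(ω/2))) := by
    have h2 : Complex.exp (↑(ω/2) * I) - Complex.exp (-(↑(ω/2)) * I)
        = 2 * I * Complex.sin (↑(ω/2)) := by
      rw [Complex.sin]; field_simp; ring_nf; rw [Complex.I_sq]; ring
    rw [← h2, mul_sub, ← Complex.exp_add, ← Complex.exp_add]
    push_cast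
    ring_nf
    rw [Complex.exp_zero]
    ring
  rw [h, norm_mul, Complex.norm_exp]
  simp only [Complex.mul_re, Complex.ofReal_re, Complex.I_re, Complex.ofReal_im, Complex.I_im]
  rw [norm_mul, norm_mul, ← Complex.ofReal_sin, Complex.norm_real, Real.norm_eq_abs]
  simp [Real.exp_zero]

lemma geom_partial_bound (ω : ℝ) (hω : ω ≠ 0) (hπ : |ω| ≤ Real.pi) (t : ℕ) :
    ‖∑ j ∈ Finset.range t, Complex.exp (-(I*↑ω))^j‖ ≤ Real.pi / |ω| := by
  set z : ℂ := Complex.exp (-(I*↑ω)) with hz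
  have hzw : z = Complex.exp (↑(-ω) * I) := by rw [hz]; congr 1; push_cast; ring
  have hsin : 2 * (|ω|/Real.pi) ≤ 2 * |Real.sin (ω/2)| := by
    have h1 : |ω/2| ≤ Real.pi/2 := by rw [abs_div, _root_.abs_two]; linarith
    have := Real.mul_abs_le_abs_sin h1
    rw [abs_div, _root_.abs_two] at this
    have hpi := Real.pi_pos
    have h2 := mul_le_mul_of_nonneg_left this (by norm_num : (0:ℝ) ≤ 2)
    have heq : 2 * (2 / Real.pi * (|ω| / 2)) = 2 * (|ω| / Real.pi) := by field_simp
    linarith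
  have habs : ‖z - 1‖ = 2 * |Real.sin (ω/2)| := by
    rw [hzw, abs_exp_mul_I_sub_one]
    rw [show (-ω)/2 = -(ω/2) by ring, Real.sin_neg, abs_neg]
  have hzpos : 0 < ‖z - 1‖ := by
    rw [habs]
    have : |ω| > 0 := abs_pos.mpr hω
    have hpi := Real.pi_pos
    calc (0:ℝ) < 2 * (|ω|/Real.pi) := by positivity
      _ ≤ _ := hsin
  have hz1 : z ≠ 1 := by
    intro h; rw [h] at hzpos; simp at hzpos
  rw [geom_sum_eq hz1, norm_div]
  have hzabs : ‖z‖ = 1 := by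
    rw [hz, Complex.norm_exp]; simp
  have hnum : ‖z^t - 1‖ ≤ 2 := by
    calc ‖z^t - 1‖ ≤ ‖z^t‖ + 1 := by
          simpa using (norm_sub_le (z^t) 1)
      _ ≤ 2 := by rw [norm_pow, hzabs, one_pow]; norm_num
  have hden : 2 * (|ω|/Real.pi) ≤ ‖z - 1‖ := by rw [habs]; exact hsin
  have hwpos : 0 < |ω| := abs_pos.mpr hω
  have hpi := Real.pi_pos
  calc ‖z^t - 1‖ / ‖z - 1‖
      ≤ 2 / (2 * (|ω|/Real.pi)) := by
        exact div_le_div₀ (by norm_num) hnum (by positivity) hden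
    _ = Real.pi / |ω| := by field_simp

/-- The function `L_{0,n}` of Dahlhaus (1983), defined for `|ω| ≤ π`
(its 2π-periodic extension is irrelevant on this range). -/
noncomputable def L0 (n : ℕ) (ω : ℝ) : ℝ :=
  if |ω| ≤ 1 / (n : ℝ) then (n : ℝ) else 1 / |ω|

/-- for every `M > 0` and `V > 0` there is `C > 0` such that, for all `n ≥ 2`,
all weights with `|a_k| ≤ M` and total variation `∑_{k=2}^{n-1} |a_k - a_{k-1}| ≤ V`, and
all `|ω| ≤ π`, the smoothing window satisfies
`|∑_{k=1}^{n-1} a_k (1 - k/n) e^{-ικω}| ≤ C · L_{0,n}(ω)`. -/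
theorem smoothing_window_L0_bound (M V : ℝ) (hM : 0 < M) (hV : 0 < V) :
    ∃ C : ℝ, 0 < C ∧ ∀ n : ℕ, 2 ≤ n → ∀ a : ℕ → ℝ,
      (∀ k : ℕ, 1 ≤ k → k ≤ n - 1 → |a k| ≤ M) →
      (∑ k ∈ Finset.Icc 2 (n - 1), |a k - a (k - 1)|) ≤ V →
      ∀ ω : ℝ, |ω| ≤ Real.pi →
        ‖∑ k ∈ Finset.Icc 1 (n - 1),
            ((a k * (1 - (k : ℝ) / (n : ℝ)) : ℝ) : ℂ) *
              Complex.exp (-(Complex.I * (k : ℂ) * (ω : ℂ)))‖ ≤ C * L0 n ω := by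
  have hpi := Real.pi_pos
  refine ⟨Real.pi * (2*M + V) + M, by positivity, ?_⟩
  intro n hn a hA hTV ω hωπ
  set m := n - 1 with hm
  have hm1 : 1 ≤ m := by omega
  have hmn : m ≤ n := by omega
  have hn0 : (0:ℝ) < n := by
    have : (2:ℝ) ≤ n := by exact_mod_cast hn
    linarith
  have hmnR : (m:ℝ) ≤ (n:ℝ) := by exact_mod_cast hmn
  set z : ℂ := Complex.exp (-(I*↑ω)) with hz
  have hterm : ∀ k : ℕ, Complex.exp (-(I * (k:ℂ) * ↑ω)) = z^k := by
    intro k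
    rw [hz, ← Complex.exp_nat_mul]
    congr 1; ring
  have hzabs : ‖z‖ = 1 := by rw [hz, Complex.norm_exp]; simp
  set b : ℕ → ℝ := fun k => a k * (1 - (k:ℝ)/(n:ℝ)) with hb
  have hsum : (∑ k ∈ Finset.Icc 1 (n-1),
      ((a k * (1 - (k : ℝ) / (n : ℝ)) : ℝ) : ℂ) * Complex.exp (-(Complex.I * (k : ℂ) * (ω : ℂ))))
      = ∑ k ∈ Finset.Icc 1 m, ((b k : ℝ) : ℂ) * z^k := by
    apply Finset.sum_congr rfl
    intro k _
    rw [hterm]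
  rw [hsum]
  have hbb : ∀ k : ℕ, 1 ≤ k → k ≤ m → |b k| ≤ M := by
    intro k h1 h2
    have ha := hA k h1 h2
    have hkR : (k:ℝ) ≤ (n:ℝ) := by
      have : k ≤ n := le_trans h2 hmn
      exact_mod_cast this
    have h0 : 0 ≤ 1 - (k:ℝ)/(n:ℝ) := by
      rw [sub_nonneg, div_le_one hn0]; exact hkR
    have h1' : 1 - (k:ℝ)/(n:ℝ) ≤ 1 := by
      have : 0 ≤ (k:ℝ)/(n:ℝ) := by positivity
      linarith
    rw [hb]
    simp only
    rw [abs_mul, _root_.abs_of_nonneg h0]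
    nlinarith [abs_nonneg (a k)]
  by_cases hcase : |ω| ≤ 1/(n:ℝ)
  · -- small frequency: trivial bound
    rw [L0, if_pos hcase]
    calc ‖∑ k ∈ Finset.Icc 1 m, ((b k : ℝ) : ℂ) * z^k‖
        ≤ ∑ k ∈ Finset.Icc 1 m, ‖((b k : ℝ) : ℂ) * z^k‖ :=
          norm_sum_le _ _
      _ ≤ ∑ k ∈ Finset.Icc 1 m, M := by
          apply Finset.sum_le_sum
          intro k hk
          rw [Finset.mem_Icc] at hk
          rw [norm_mul, norm_pow, hzabs, one_pow, mul_one, Complex.norm_real, Real.norm_eq_abs]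
          exact hbb k hk.1 hk.2
      _ = (m : ℝ) * M := by rw [Finset.sum_const, Nat.card_Icc]; simp [mul_comm]
      _ ≤ (Real.pi * (2*M + V) + M) * (n:ℝ) := by
          nlinarith [mul_le_mul_of_nonneg_right hmnR hM.le,
            mul_pos (mul_pos hpi (by linarith : (0:ℝ) < 2*M+V)) hn0]
  · -- large frequency
    push_neg at hcase
    have hω0 : ω ≠ 0 := by
      intro h
      rw [h, abs_zero] at hcase
      have : (0:ℝ) < 1/(n:ℝ) := by positivity
      linarith
    have hwpos : 0 < |ω| := abs_pos.mpr hω0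
    rw [L0, if_neg (not_le.mpr hcase)]
    -- partial geometric sums
    have hG : ∀ t : ℕ, ‖∑ j ∈ Finset.range t, z^(j+1)‖ ≤ Real.pi/|ω| := by
      intro t
      have he : (∑ j ∈ Finset.range t, z^(j+1)) = z * ∑ j ∈ Finset.range t, z^j := by
        rw [Finset.mul_sum]
        apply Finset.sum_congr rfl
        intro j _
        rw [pow_succ]; ring
      rw [he, norm_mul, hzabs, one_mul]
      exact geom_partial_bound ω hω0 hωπ t
    -- Abel summation
    have hIcc : (∑ k ∈ Finset.Icc 1 m, ((b k : ℝ) : ℂ) * z^k)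
        = ∑ i ∈ Finset.range m, ((b (i+1) : ℝ) : ℂ) • z^(i+1) := by
      rw [← Finset.Ico_add_one_right_eq_Icc, Finset.sum_Ico_eq_sum_range]
      simp only [Nat.add_sub_cancel, smul_eq_mul]
      apply Finset.sum_congr rfl
      intro i _
      rw [add_comm 1 i]
    rw [hIcc, Finset.sum_range_by_parts (fun i => ((b (i+1) : ℝ) : ℂ)) (fun i => z^(i+1)) m]
    simp only [smul_eq_mul]
    have hmm : m - 1 + 1 = m := Nat.succ_pred_eq_of_pos hm1
    -- bound each part
    have hswap : Real.pi / |ω| = Real.pi * (1/|ω|) := by ring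
    have hpart1 : ‖((b (m-1+1) : ℝ) : ℂ) * ∑ j ∈ Finset.range m, z^(j+1)‖
        ≤ M * (Real.pi/|ω|) := by
      rw [norm_mul, Complex.norm_real, Real.norm_eq_abs, hmm]
      apply mul_le_mul (hbb m hm1 le_rfl) (hG m) (norm_nonneg _) hM.le
    have hdiff : ∀ i : ℕ, i < m - 1 →
        |b (i+2) - b (i+1)| ≤ |a (i+2) - a (i+1)| + M/(n:ℝ) := by
      intro i hi
      have h2m : i + 2 ≤ m := by omega
      have h1m : i + 1 ≤ m := by omega
      have ha1 : |a (i+1)| ≤ M := hA (i+1) (by omega) h1m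
      have hk2 : ((i:ℝ)+2) ≤ (n:ℝ) := by
        have : i + 2 ≤ n := le_trans h2m hmn
        exact_mod_cast this
      have hfact : b (i+2) - b (i+1)
          = (a (i+2) - a (i+1)) * (1 - ((i:ℝ)+2)/(n:ℝ)) - a (i+1) * (1/(n:ℝ)) := by
        rw [hb]
        simp only
        push_cast
        field_simp
        ring
      rw [hfact]
      have h0 : 0 ≤ 1 - ((i:ℝ)+2)/(n:ℝ) := by
        rw [sub_nonneg, div_le_one hn0]; exact hk2
      have h1' : 1 - ((i:ℝ)+2)/(n:ℝ) ≤ 1 := by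
        have : 0 ≤ ((i:ℝ)+2)/(n:ℝ) := by positivity
        linarith
      calc |(a (i+2) - a (i+1)) * (1 - ((i:ℝ)+2)/(n:ℝ)) - a (i+1) * (1/(n:ℝ))|
          ≤ |(a (i+2) - a (i+1)) * (1 - ((i:ℝ)+2)/(n:ℝ))| + |a (i+1) * (1/(n:ℝ))| :=
            abs_sub _ _
        _ ≤ |a (i+2) - a (i+1)| + M/(n:ℝ) := by
            rw [abs_mul, abs_mul, _root_.abs_of_nonneg h0, _root_.abs_of_nonneg (by positivity : (0:ℝ) ≤ 1/(n:ℝ))]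
            have e1 : |a (i+2) - a (i+1)| * (1 - ((i:ℝ)+2)/(n:ℝ)) ≤ |a (i+2) - a (i+1)| := by
              nlinarith [abs_nonneg (a (i+2) - a (i+1))]
            have e2 : |a (i+1)| * (1/(n:ℝ)) ≤ M/(n:ℝ) := by
              rw [div_eq_mul_one_div M]
              exact mul_le_mul_of_nonneg_right ha1 (by positivity)
            linarith
    have hTV' : (∑ i ∈ Finset.range (m-1), |a (i+2) - a (i+1)|) ≤ V := by
      have : (∑ k ∈ Finset.Icc 2 m, |a k - a (k-1)|) ≤ V := hTV
      rw [← Finset.Ico_add_one_right_eq_Icc, Finset.sum_Ico_eq_sum_range] at this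
      have hmr : m + 1 - 2 = m - 1 := by omega
      rw [hmr] at this
      refine le_trans (le_of_eq ?_) this
      apply Finset.sum_congr rfl
      intro i _
      have h2 : 2 + i - 1 = i + 1 := by omega
      have h1 : 2 + i = i + 2 := by omega
      rw [h2, h1]
    have hpart2 : ‖∑ i ∈ Finset.range (m-1),
        (((b (i+1+1) : ℝ) : ℂ) - ((b (i+1) : ℝ) : ℂ)) * ∑ j ∈ Finset.range (i+1), z^(j+1)‖
        ≤ (V + M) * (Real.pi/|ω|) := by
      calc ‖∑ i ∈ Finset.range (m-1),
            (((b (i+1+1) : ℝ) : ℂ) - ((b (i+1) : ℝ) : ℂ)) * ∑ j ∈ Finset.range (i+1), z^(j+1)‖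
          ≤ ∑ i ∈ Finset.range (m-1), ‖
            (((b (i+1+1) : ℝ) : ℂ) - ((b (i+1) : ℝ) : ℂ)) * ∑ j ∈ Finset.range (i+1), z^(j+1)‖ :=
            norm_sum_le _ _
        _ ≤ ∑ i ∈ Finset.range (m-1), (|a (i+2) - a (i+1)| + M/(n:ℝ)) * (Real.pi/|ω|) := by
            apply Finset.sum_le_sum
            intro i hi
            rw [Finset.mem_range] at hi
            rw [norm_mul, ← Complex.ofReal_sub, Complex.norm_real, Real.norm_eq_abs]
            have hd := hdiff i hi
            have := hG (i+1)
            apply mul_le_mul ?_ this (norm_nonneg _) ?_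
            · exact le_trans (le_of_eq (by norm_num)) hd
            · have : (0:ℝ) ≤ |a (i+2) - a (i+1)| := abs_nonneg _
              positivity
        _ = (∑ i ∈ Finset.range (m-1), (|a (i+2) - a (i+1)| + M/(n:ℝ))) * (Real.pi/|ω|) := by
            rw [← Finset.sum_mul]
        _ ≤ (V + M) * (Real.pi/|ω|) := by
            apply mul_le_mul_of_nonneg_right ?_ (by positivity)
            rw [Finset.sum_add_distrib, Finset.sum_const, Finset.card_range, nsmul_eq_mul]
            have hcount : ((m-1 : ℕ):ℝ) * (M/(n:ℝ)) ≤ M := by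
              have hle : ((m-1:ℕ):ℝ) ≤ (n:ℝ) := by
                have : m - 1 ≤ n := by omega
                exact_mod_cast this
              rw [mul_div_assoc']
              rw [div_le_iff₀ hn0]
              nlinarith
            linarith [hTV']
    calc ‖((b (m-1+1) : ℝ) : ℂ) * ∑ j ∈ Finset.range m, z^(j+1)
          - ∑ i ∈ Finset.range (m-1),
            (((b (i+1+1) : ℝ) : ℂ) - ((b (i+1) : ℝ) : ℂ)) * ∑ j ∈ Finset.range (i+1), z^(j+1)‖
        ≤ M * (Real.pi/|ω|) + (V + M) * (Real.pi/|ω|) := by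
          refine le_trans (norm_sub_le _ _) ?_
          exact add_le_add hpart1 hpart2
      _ ≤ (Real.pi * (2*M + V) + M) * (1/|ω|) := by
          rw [div_eq_mul_one_div Real.pi]
          nlinarith [one_div_pos.mpr hwpos]
end

section
/- Let r : ℤ → ℝ satisfy ∑_{k∈ℤ}(1+|k|)|r(k)| < ∞ and let M > 0. Then there exists a constant C > 0 such that for all n ≥ 2 and all real weights a_1,…,a_{n−1} with max_{1≤k≤n−1}|a_k| ≤ M, one has |∑_{j=1}^{n−1}∑_{k=1}^{n−1} a_j a_k (1 − k/n) ∑_{t∈ℤ} r(t)·r(t+j+k)| ≤ C. (This is the bound |S̃_{2n}| ≤ C/n after multiplying by n, obtained by grouping pairs (j,k) according to d = j + k.) -/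
open Finset

private lemma count_lemma (g : ℕ → ℝ) (hg : ∀ d, 0 ≤ g d) (N : ℕ) :
    ∑ j ∈ Icc 1 N, ∑ k ∈ Icc 1 N, g (j + k)
      ≤ ∑ d ∈ Icc 2 (2 * N), ((d - 1 : ℕ) : ℝ) * g d := by
  classical
  have h1 : ∑ j ∈ Icc 1 N, ∑ k ∈ Icc 1 N, g (j + k)
      = ∑ p ∈ Icc 1 N ×ˢ Icc 1 N, g (p.1 + p.2) := by
    rw [Finset.sum_product]
  have himg : ∑ p ∈ Icc 1 N ×ˢ Icc 1 N, g (p.1 + p.2)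
      = ∑ q ∈ (Icc 1 N ×ˢ Icc 1 N).image (fun p : ℕ × ℕ => (p.1 + p.2, p.2)), g q.1 := by
    rw [Finset.sum_image]
    intro p _ q _ hpq
    simp only [Prod.mk.injEq] at hpq
    obtain ⟨e1, e2⟩ := hpq
    exact Prod.ext_iff.mpr ⟨by omega, e2⟩
  have hsub : (Icc 1 N ×ˢ Icc 1 N).image (fun p : ℕ × ℕ => (p.1 + p.2, p.2))
      ⊆ (Icc 2 (2 * N)).biUnion (fun d => {d} ×ˢ Icc 1 (d - 1)) := by
    intro q hq
    simp only [mem_image, mem_product, mem_Icc] at hq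
    obtain ⟨p, ⟨⟨hp1, hp2⟩, hp3, hp4⟩, rfl⟩ := hq
    simp only [mem_biUnion, mem_product, mem_Icc, mem_singleton]
    exact ⟨p.1 + p.2, ⟨by omega, by omega⟩, rfl, by omega, by omega⟩
  have hbi : ∑ q ∈ (Icc 2 (2 * N)).biUnion (fun d => {d} ×ˢ Icc 1 (d - 1)), g q.1
      = ∑ d ∈ Icc 2 (2 * N), ((d - 1 : ℕ) : ℝ) * g d := by
    rw [Finset.sum_biUnion]
    · refine Finset.sum_congr rfl fun d _ => ?_
      rw [Finset.sum_product]
      simp [Nat.card_Icc, mul_comm]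
    · intro d _ e _ hde
      simp only [Function.onFun]
      rw [Finset.disjoint_left]
      intro q hq1 hq2
      simp only [mem_product, mem_singleton, mem_Icc] at hq1 hq2
      exact hde (hq1.1.symm.trans hq2.1)
  calc ∑ j ∈ Icc 1 N, ∑ k ∈ Icc 1 N, g (j + k)
      = ∑ q ∈ (Icc 1 N ×ˢ Icc 1 N).image (fun p : ℕ × ℕ => (p.1 + p.2, p.2)), g q.1 := by
        rw [h1, himg]
    _ ≤ ∑ q ∈ (Icc 2 (2 * N)).biUnion (fun d => {d} ×ˢ Icc 1 (d - 1)), g q.1 :=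
        Finset.sum_le_sum_of_subset_of_nonneg hsub (fun q _ _ => hg q.1)
    _ = ∑ d ∈ Icc 2 (2 * N), ((d - 1 : ℕ) : ℝ) * g d := hbi

/-- under A.1, for bounded weights `a_1, …, a_{n-1}` (`|a_k| ≤ M`), the quantity
`|∑_{j,k=1}^{n-1} a_j a_k (1 - k/n) ∑_{t∈ℤ} r(t) r(t+j+k)|` is bounded by a constant `C`
uniformly in `n` and in the weights. -/
theorem weighted_lagged_sum_bound (r : ℤ → ℝ)
    (hA1 : Summable fun k : ℤ => (1 + |(k : ℝ)|) * |r k|)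
    (M : ℝ) (hM : 0 < M) :
    ∃ C : ℝ, 0 < C ∧ ∀ n : ℕ, 2 ≤ n → ∀ a : ℕ → ℝ,
      (∀ k : ℕ, 1 ≤ k → k ≤ n - 1 → |a k| ≤ M) →
      |∑ j ∈ Finset.Icc 1 (n - 1), ∑ k ∈ Finset.Icc 1 (n - 1),
          a j * a k * (1 - (k : ℝ) / (n : ℝ)) *
            ∑' t : ℤ, r t * r (t + (j : ℤ) + (k : ℤ))| ≤ C := by
  classical
  set h : ℤ → ℝ := fun t => (1 + |(t : ℝ)|) * |r t| with hhdef
  have hh_nonneg : ∀ t, 0 ≤ h t := fun t => mul_nonneg (by positivity) (abs_nonneg _)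
  have hh_sum : Summable h := hA1
  set K : ℝ := ∑' t : ℤ, h t with hKdef
  have hK0 : 0 ≤ K := tsum_nonneg hh_nonneg
  have hh_le_K : ∀ t, h t ≤ K := fun t => hh_sum.le_tsum t (fun j _ => hh_nonneg j)
  have habs_le_h : ∀ t : ℤ, |r t| ≤ h t := by
    intro t
    have : (1 : ℝ) ≤ 1 + |(t : ℝ)| := le_add_of_nonneg_right (abs_nonneg _)
    exact le_mul_of_one_le_left (abs_nonneg _) this
  have habs_sum : Summable fun t : ℤ => |r t| :=
    hh_sum.of_nonneg_of_le (fun t => abs_nonneg _) habs_le_h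
  have habs_le : ∀ t : ℤ, |r t| ≤ K := fun t => (habs_le_h t).trans (hh_le_K t)
  have hρ_sum : ∀ d : ℤ, Summable fun t : ℤ => |r t| * |r (t + d)| := by
    intro d
    apply (habs_sum.mul_right K).of_nonneg_of_le
      (fun t => mul_nonneg (abs_nonneg _) (abs_nonneg _))
    exact fun t => mul_le_mul_of_nonneg_left (habs_le _) (abs_nonneg _)
  set ρ : ℤ → ℝ := fun d => ∑' t : ℤ, |r t| * |r (t + d)| with hρdef
  have hρ_nonneg : ∀ d, 0 ≤ ρ d :=
    fun d => tsum_nonneg fun t => mul_nonneg (abs_nonneg _) (abs_nonneg _)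
  have hσ_sum : ∀ d : ℤ, Summable fun t : ℤ => h t * h (t + d) := by
    intro d
    apply (hh_sum.mul_right K).of_nonneg_of_le
      (fun t => mul_nonneg (hh_nonneg _) (hh_nonneg _))
    exact fun t => mul_le_mul_of_nonneg_left (hh_le_K _) (hh_nonneg _)
  -- step 3b: sum of σ over any finset of nonneg naturals is at most K * K
  have hσ_bound : ∀ F : Finset ℕ, ∑ d ∈ F, (∑' t : ℤ, h t * h (t + (d : ℤ))) ≤ K * K := by
    intro F
    have hswap : ∑ d ∈ F, (∑' t : ℤ, h t * h (t + (d : ℤ)))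
        = ∑' t : ℤ, ∑ d ∈ F, h t * h (t + (d : ℤ)) :=
      (Summable.tsum_finsetSum (s := F) (f := fun (d : ℕ) (t : ℤ) => h t * h (t + (d : ℤ))) (fun d _ => hσ_sum d)).symm
    rw [hswap]
    have hpt : ∀ t : ℤ, ∑ d ∈ F, h t * h (t + (d : ℤ)) ≤ h t * K := by
      intro t
      rw [← Finset.mul_sum]
      refine mul_le_mul_of_nonneg_left ?_ (hh_nonneg t)
      have himg : ∑ d ∈ F, h (t + (d : ℤ)) = ∑ m ∈ F.image (fun d : ℕ => t + (d : ℤ)), h m := by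
        rw [Finset.sum_image]
        intro x _ y _ hxy; simp only at hxy
        omega
      rw [himg]
      exact hh_sum.sum_le_tsum _ (fun m _ => hh_nonneg m)
    calc ∑' t : ℤ, ∑ d ∈ F, h t * h (t + (d : ℤ))
        ≤ ∑' t : ℤ, h t * K :=
          Summable.tsum_le_tsum hpt (summable_sum fun d _ => hσ_sum d) (hh_sum.mul_right K)
      _ = K * K := by rw [tsum_mul_right]
  -- step 3a : (d-1) * ρ d ≤ σ d
  have hstep3a : ∀ d : ℕ, ((d - 1 : ℕ) : ℝ) * ρ ((d : ℕ) : ℤ)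
      ≤ ∑' t : ℤ, h t * h (t + (d : ℤ)) := by
    intro d
    rw [hρdef]
    simp only
    rw [← tsum_mul_left]
    refine Summable.tsum_le_tsum ?_ ((hρ_sum _).mul_left _) (hσ_sum _)
    intro t
    have h1 : ((d - 1 : ℕ) : ℝ) ≤ (1 + |(t : ℝ)|) * (1 + |((t + (d : ℤ) : ℤ) : ℝ)|) := by
      have hd1 : ((d : ℕ) : ℝ) = |(((d : ℕ) : ℤ) : ℝ)| := by
        rw [abs_of_nonneg]; push_cast; ring; positivity
      have htri : |(((d : ℕ) : ℤ) : ℝ)| ≤ |(t : ℝ)| + |((t + (d : ℤ) : ℤ) : ℝ)| := by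
        have he : (((d : ℕ) : ℤ) : ℝ) = ((t + (d : ℤ) : ℤ) : ℝ) - (t : ℝ) := by
          push_cast; ring
        rw [he]
        calc |((t + (d : ℤ) : ℤ) : ℝ) - (t : ℝ)|
            ≤ |((t + (d : ℤ) : ℤ) : ℝ)| + |(t : ℝ)| := abs_sub _ _
          _ = |(t : ℝ)| + |((t + (d : ℤ) : ℤ) : ℝ)| := by ring
      have hdl : ((d - 1 : ℕ) : ℝ) ≤ ((d : ℕ) : ℝ) := by
        exact_mod_cast Nat.sub_le d 1
      have ha : (0:ℝ) ≤ |(t : ℝ)| := abs_nonneg _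
      have hb : (0:ℝ) ≤ |((t + (d : ℤ) : ℤ) : ℝ)| := abs_nonneg _
      nlinarith [hd1 ▸ htri]
    have h2 : (0:ℝ) ≤ |r t| * |r (t + (d : ℤ))| :=
      mul_nonneg (abs_nonneg _) (abs_nonneg _)
    calc ((d - 1 : ℕ) : ℝ) * (|r t| * |r (t + (d : ℤ))|)
        ≤ ((1 + |(t : ℝ)|) * (1 + |((t + (d : ℤ) : ℤ) : ℝ)|)) * (|r t| * |r (t + (d : ℤ))|) :=
          mul_le_mul_of_nonneg_right h1 h2
      _ = h t * h (t + (d : ℤ)) := by simp only [hhdef]; ring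
  refine ⟨M * M * (K * K) + 1, by positivity, ?_⟩
  intro n hn a ha
  set N := n - 1 with hN
  have hnpos : (0:ℝ) < (n : ℝ) := by
    have : 0 < n := lt_of_lt_of_le (by norm_num) hn
    exact_mod_cast this
  set g : ℕ → ℝ := fun m => ρ ((m : ℕ) : ℤ) with hgdef
  have key : ∀ j ∈ Icc 1 N, ∀ k ∈ Icc 1 N,
      |a j * a k * (1 - (k : ℝ) / (n : ℝ)) * ∑' t : ℤ, r t * r (t + (j : ℤ) + (k : ℤ))|
        ≤ M * M * g (j + k) := by
    intro j hj k hk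
    simp only [mem_Icc] at hj hk
    have haj : |a j| ≤ M := ha j hj.1 hj.2
    have hak : |a k| ≤ M := ha k hk.1 hk.2
    have hM0 : (0:ℝ) ≤ M := hM.le
    have hw : |1 - (k : ℝ) / (n : ℝ)| ≤ 1 := by
      have hkn : (k : ℝ) ≤ (n : ℝ) := by
        have : k ≤ n := le_trans hk.2 (Nat.sub_le n 1)
        exact_mod_cast this
      have h01 : (0:ℝ) ≤ (k : ℝ) / (n : ℝ) := by positivity
      have hle1 : (k : ℝ) / (n : ℝ) ≤ 1 := by
        rw [div_le_one hnpos]; exact hkn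
      rw [abs_le]; constructor <;> linarith
    have hcast : ∀ t : ℤ, t + (j : ℤ) + (k : ℤ) = t + (((j + k : ℕ)) : ℤ) := by
      intro t; push_cast; ring
    have hs : Summable fun t : ℤ => |r t * r (t + (j : ℤ) + (k : ℤ))| := by
      have : (fun t : ℤ => |r t * r (t + (j : ℤ) + (k : ℤ))|)
          = fun t : ℤ => |r t| * |r (t + (((j + k : ℕ)) : ℤ))| := by
        funext t; rw [hcast t, abs_mul]
      rw [this]; exact hρ_sum _
    have hts : |∑' t : ℤ, r t * r (t + (j : ℤ) + (k : ℤ))| ≤ g (j + k) := by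
      calc |∑' t : ℤ, r t * r (t + (j : ℤ) + (k : ℤ))|
          ≤ ∑' t : ℤ, |r t * r (t + (j : ℤ) + (k : ℤ))| := by
            simpa only [Real.norm_eq_abs] using
              norm_tsum_le_tsum_norm (f := fun t : ℤ => r t * r (t + (j : ℤ) + (k : ℤ)))
                (by simpa only [Real.norm_eq_abs] using hs)
        _ = g (j + k) := by
            simp only [hgdef, hρdef]
            exact tsum_congr fun t => by rw [hcast t, abs_mul]
    have step1 : |a j| * |a k| ≤ M * M := mul_le_mul haj hak (abs_nonneg _) hM0
    have step2 : |a j| * |a k| * |1 - (k : ℝ) / (n : ℝ)| ≤ M * M * 1 :=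
      mul_le_mul step1 hw (abs_nonneg _) (by positivity)
    have hg0 : 0 ≤ g (j + k) := hρ_nonneg _
    calc |a j * a k * (1 - (k : ℝ) / (n : ℝ)) * ∑' t : ℤ, r t * r (t + (j : ℤ) + (k : ℤ))|
        = |a j| * |a k| * |1 - (k : ℝ) / (n : ℝ)|
            * |∑' t : ℤ, r t * r (t + (j : ℤ) + (k : ℤ))| := by
          rw [abs_mul, abs_mul, abs_mul]
      _ ≤ (M * M * 1) * g (j + k) :=
          mul_le_mul step2 hts (abs_nonneg _) (by positivity)
      _ = M * M * g (j + k) := by ring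
  calc |∑ j ∈ Icc 1 N, ∑ k ∈ Icc 1 N,
          a j * a k * (1 - (k : ℝ) / (n : ℝ)) * ∑' t : ℤ, r t * r (t + (j : ℤ) + (k : ℤ))|
      ≤ ∑ j ∈ Icc 1 N, |∑ k ∈ Icc 1 N,
          a j * a k * (1 - (k : ℝ) / (n : ℝ)) * ∑' t : ℤ, r t * r (t + (j : ℤ) + (k : ℤ))| :=
        Finset.abs_sum_le_sum_abs _ _
    _ ≤ ∑ j ∈ Icc 1 N, ∑ k ∈ Icc 1 N,
          |a j * a k * (1 - (k : ℝ) / (n : ℝ)) * ∑' t : ℤ, r t * r (t + (j : ℤ) + (k : ℤ))| :=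
        Finset.sum_le_sum fun j _ => Finset.abs_sum_le_sum_abs _ _
    _ ≤ ∑ j ∈ Icc 1 N, ∑ k ∈ Icc 1 N, M * M * g (j + k) :=
        Finset.sum_le_sum fun j hj => Finset.sum_le_sum fun k hk => key j hj k hk
    _ = M * M * ∑ j ∈ Icc 1 N, ∑ k ∈ Icc 1 N, g (j + k) := by
        rw [Finset.mul_sum]
        exact Finset.sum_congr rfl fun j _ => by rw [Finset.mul_sum]
    _ ≤ M * M * ∑ d ∈ Icc 2 (2 * N), ((d - 1 : ℕ) : ℝ) * g d :=
        mul_le_mul_of_nonneg_left (count_lemma g (fun d => hρ_nonneg _) N) (by positivity)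
    _ ≤ M * M * (K * K) := by
        refine mul_le_mul_of_nonneg_left ?_ (by positivity)
        calc ∑ d ∈ Icc 2 (2 * N), ((d - 1 : ℕ) : ℝ) * g d
            ≤ ∑ d ∈ Icc 2 (2 * N), (∑' t : ℤ, h t * h (t + (d : ℤ))) :=
              Finset.sum_le_sum fun d _ => hstep3a d
          _ ≤ K * K := hσ_bound _
    _ ≤ M * M * (K * K) + 1 := by linarith
end

section
/- Let ℓ_n be a sequence of positive reals with ℓ_n ≥ 1, ℓ_n → ∞, and ℓ_n·(log n)/n → 0 as n → ∞. Set q_n = 1 − 1/ℓ_n and q_{k,n} = (1 − k/n)q_n^k + (k/n)q_n^{n−k} for 1 ≤ k ≤ n−1, and define A_n = ∑_{k=1}^{n−1} (2q_{k,n})²·(1 − k/n)². Then lim_{n→∞} A_n/ℓ_n = 2. -/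
open Filter
open Topology

/-- The stationary bootstrap lag weight `q_{k,n} = (1 - k/n) q^k + (k/n) q^{n-k}`. -/
noncomputable def sbWeight (n : ℕ) (q : ℝ) (k : ℕ) : ℝ :=
  (1 - (k : ℝ) / (n : ℝ)) * q ^ k + ((k : ℝ) / (n : ℝ)) * q ^ (n - k)

lemma sum_geom_Icc (n : ℕ) (hn : 1 ≤ n) (x : ℝ) (hx : x ≠ 1) :
    ∑ k ∈ Finset.Icc 1 (n - 1), x ^ k = (x - x ^ n) / (1 - x) := by
  have h : Finset.Icc 1 (n - 1) = Finset.Ico 1 n := by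
    rw [← Finset.Ico_add_one_right_eq_Icc]; congr 1; omega
  have hx1 : x - 1 ≠ 0 := sub_ne_zero.mpr hx
  have hx2 : (1 : ℝ) - x ≠ 0 := fun h => hx1 (by linarith [sub_eq_zero.mp h])
  rw [h, Finset.sum_Ico_eq_sub _ hn, geom_sum_eq hx, geom_sum_eq hx]
  field_simp
  ring

lemma sum_kgeom_le (s : Finset ℕ) (x : ℝ) (hx0 : 0 ≤ x) (hx1 : x < 1) :
    ∑ k ∈ s, (k : ℝ) * x ^ k ≤ x / (1 - x) ^ 2 := by
  have hn : ‖x‖ < 1 := by rwa [Real.norm_eq_abs, abs_of_nonneg hx0]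
  have h := hasSum_coe_mul_geometric_of_norm_lt_one (𝕜 := ℝ) hn
  calc ∑ k ∈ s, (k : ℝ) * x ^ k ≤ ∑' k : ℕ, (k : ℝ) * x ^ k :=
        Summable.sum_le_tsum s (fun i _ => by positivity) h.summable
    _ = x / (1 - x) ^ 2 := h.tsum_eq

lemma sum_reflect_Icc (n : ℕ) (f : ℕ → ℝ) :
    ∑ k ∈ Finset.Icc 1 (n - 1), f (n - k) = ∑ k ∈ Finset.Icc 1 (n - 1), f k := by
  apply Finset.sum_nbij' (i := fun k => n - k) (j := fun k => n - k)
  all_goals intro a ha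
  all_goals simp only [Finset.mem_Icc] at *
  all_goals omega


lemma term_core (a b P Q R : ℝ) (ha0 : 0 ≤ a) (hab : a = 1 - b) (hb0 : 0 ≤ b) (hb1 : b ≤ 1)
    (hP0 : 0 ≤ P) (hP1 : P ≤ 1) (hQ0 : 0 ≤ Q) (hQ1 : Q ≤ 1) (hPQ : P * Q = R) :
    4 * P ^ 2 - 16 * b * P ^ 2 ≤ (2 * (a * P + b * Q)) ^ 2 * a ^ 2 ∧
    (2 * (a * P + b * Q)) ^ 2 * a ^ 2 ≤ 4 * P ^ 2 + 8 * R + 4 * a * Q ^ 2 := by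
  subst hab
  have ha1 : 1 - b ≤ 1 := by linarith
  constructor
  · nlinarith [sq_nonneg P, sq_nonneg b, sq_nonneg (b - 2), sq_nonneg (b * P),
      mul_nonneg (mul_nonneg hb0 hb0) (sq_nonneg P),
      mul_nonneg (mul_nonneg (mul_nonneg ha0 ha0) (mul_nonneg ha0 hb0)) (mul_nonneg hP0 hQ0),
      mul_nonneg (mul_nonneg (mul_nonneg ha0 ha0) (mul_nonneg hb0 hb0)) (sq_nonneg Q),
      mul_nonneg (mul_nonneg (sq_nonneg b) (sq_nonneg (b-2))) (sq_nonneg P)]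
  · subst hPQ
    have hA : (1 - b) ^ 4 ≤ 1 := pow_le_one₀ ha0 ha1
    have e1 : (1 - b) ^ 4 * P ^ 2 ≤ P ^ 2 := by nlinarith [mul_le_mul_of_nonneg_right hA (sq_nonneg P)]
    have e2 : (1 - b) ^ 3 * b * (P * Q) ≤ P * Q := by
      have h3 : (1 - b) ^ 3 * b ≤ 1 := mul_le_one₀ (pow_le_one₀ ha0 ha1) hb0 hb1
      nlinarith [mul_nonneg hP0 hQ0]
    have e3 : (1 - b) ^ 2 * b ^ 2 * Q ^ 2 ≤ (1 - b) * Q ^ 2 := by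
      have h5 : (1 - b) * b ^ 2 ≤ 1 := mul_le_one₀ ha1 (sq_nonneg b) (pow_le_one₀ hb0 hb1)
      have h4 : (1 - b) ^ 2 * b ^ 2 ≤ (1 - b) := by nlinarith [mul_nonneg ha0 (sub_nonneg.mpr h5)]
      nlinarith [mul_le_mul_of_nonneg_right h4 (sq_nonneg Q)]
    nlinarith [e1, e2, e3]

lemma term_bounds (n k : ℕ) (hn : 2 ≤ n) (hk1 : 1 ≤ k) (hk2 : k ≤ n - 1)
    (q : ℝ) (hq0 : 0 ≤ q) (hq1 : q < 1) :
    (4 * (q ^ 2) ^ k - 16 * ((k : ℝ) / n) * (q ^ 2) ^ k ≤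
      (2 * sbWeight n q k) ^ 2 * (1 - (k : ℝ) / n) ^ 2) ∧
    ((2 * sbWeight n q k) ^ 2 * (1 - (k : ℝ) / n) ^ 2 ≤
      4 * (q ^ 2) ^ k + 8 * q ^ n + 4 * (((n - k : ℕ) : ℝ) / n) * (q ^ 2) ^ (n - k)) := by
  have hkn : k ≤ n := by omega
  have hn0 : (0 : ℝ) < n := by positivity
  have hb0 : (0:ℝ) ≤ (k : ℝ) / n := by positivity
  have hb1 : (k : ℝ) / n ≤ 1 := by rw [div_le_one hn0]; exact_mod_cast hkn
  have ha0 : (0:ℝ) ≤ 1 - (k : ℝ) / n := by linarith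
  have hacast : ((n - k : ℕ) : ℝ) / n = 1 - (k : ℝ) / n := by
    rw [Nat.cast_sub hkn]; field_simp
  have hP0 : (0:ℝ) ≤ q ^ k := by positivity
  have hQ0 : (0:ℝ) ≤ q ^ (n - k) := by positivity
  have hP1 : q ^ k ≤ 1 := pow_le_one₀ hq0 hq1.le
  have hQ1 : q ^ (n - k) ≤ 1 := pow_le_one₀ hq0 hq1.le
  have hPQ : q ^ k * q ^ (n - k) = q ^ n := by
    rw [← pow_add, Nat.add_sub_cancel' hkn]
  have hxk : (q ^ 2) ^ k = (q ^ k) ^ 2 := by rw [← pow_mul, ← pow_mul, Nat.mul_comm]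
  have hxnk : (q ^ 2) ^ (n - k) = (q ^ (n - k)) ^ 2 := by rw [← pow_mul, ← pow_mul, Nat.mul_comm]
  have h := term_core (1 - (k : ℝ) / n) ((k : ℝ) / n) (q ^ k) (q ^ (n - k)) (q ^ n)
    ha0 rfl hb0 hb1 hP0 hP1 hQ0 hQ1 hPQ
  rw [hxk, hxnk, hacast]
  exact ⟨h.1, h.2⟩

lemma S_lower (n : ℕ) (hn : 2 ≤ n) (q : ℝ) (hq0 : 0 ≤ q) (hq1 : q < 1) :
    4 * ((q ^ 2 - (q ^ 2) ^ n) / (1 - q ^ 2)) - (16 / n) * (q ^ 2 / (1 - q ^ 2) ^ 2) ≤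
    ∑ k ∈ Finset.Icc 1 (n - 1), (2 * sbWeight n q k) ^ 2 * (1 - (k : ℝ) / n) ^ 2 := by
  have hx0 : (0:ℝ) ≤ q ^ 2 := by positivity
  have hx1 : q ^ 2 < 1 := by nlinarith
  have hxne : q ^ 2 ≠ 1 := ne_of_lt hx1
  have hn0 : (0 : ℝ) < n := by positivity
  have step : ∑ k ∈ Finset.Icc 1 (n - 1), (4 * (q ^ 2) ^ k - 16 * ((k : ℝ) / n) * (q ^ 2) ^ k) ≤
      ∑ k ∈ Finset.Icc 1 (n - 1), (2 * sbWeight n q k) ^ 2 * (1 - (k : ℝ) / n) ^ 2 := by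
    apply Finset.sum_le_sum
    intro k hk
    rw [Finset.mem_Icc] at hk
    exact (term_bounds n k hn hk.1 hk.2 q hq0 hq1).1
  refine le_trans ?_ step
  rw [Finset.sum_sub_distrib]
  have e1 : ∑ k ∈ Finset.Icc 1 (n - 1), 4 * (q ^ 2) ^ k =
      4 * ((q ^ 2 - (q ^ 2) ^ n) / (1 - q ^ 2)) := by
    rw [← Finset.mul_sum, sum_geom_Icc n (by omega) _ hxne]
  have e2 : ∑ k ∈ Finset.Icc 1 (n - 1), 16 * ((k : ℝ) / n) * (q ^ 2) ^ k ≤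
      (16 / n) * (q ^ 2 / (1 - q ^ 2) ^ 2) := by
    have : ∀ k : ℕ, 16 * ((k : ℝ) / n) * (q ^ 2) ^ k = (16 / n) * ((k : ℝ) * (q ^ 2) ^ k) := by
      intro k; ring
    simp_rw [this]
    rw [← Finset.mul_sum]
    have h16 : (0:ℝ) ≤ 16 / n := by positivity
    exact mul_le_mul_of_nonneg_left (sum_kgeom_le _ _ hx0 hx1) h16
  linarith

lemma S_upper (n : ℕ) (hn : 2 ≤ n) (q : ℝ) (hq0 : 0 ≤ q) (hq1 : q < 1) :
    ∑ k ∈ Finset.Icc 1 (n - 1), (2 * sbWeight n q k) ^ 2 * (1 - (k : ℝ) / n) ^ 2 ≤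
    4 * (q ^ 2 / (1 - q ^ 2)) + 8 * n * q ^ n + (4 / n) * (q ^ 2 / (1 - q ^ 2) ^ 2) := by
  have hx0 : (0:ℝ) ≤ q ^ 2 := by positivity
  have hx1 : q ^ 2 < 1 := by nlinarith
  have hxne : q ^ 2 ≠ 1 := ne_of_lt hx1
  have h1x : (0:ℝ) < 1 - q ^ 2 := by linarith
  have hn0 : (0 : ℝ) < n := by positivity
  have step : ∑ k ∈ Finset.Icc 1 (n - 1), (2 * sbWeight n q k) ^ 2 * (1 - (k : ℝ) / n) ^ 2 ≤
      ∑ k ∈ Finset.Icc 1 (n - 1),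
        (4 * (q ^ 2) ^ k + 8 * q ^ n + 4 * (((n - k : ℕ) : ℝ) / n) * (q ^ 2) ^ (n - k)) := by
    apply Finset.sum_le_sum
    intro k hk
    rw [Finset.mem_Icc] at hk
    exact (term_bounds n k hn hk.1 hk.2 q hq0 hq1).2
  refine le_trans step ?_
  rw [Finset.sum_add_distrib, Finset.sum_add_distrib]
  have e1 : ∑ k ∈ Finset.Icc 1 (n - 1), 4 * (q ^ 2) ^ k ≤ 4 * (q ^ 2 / (1 - q ^ 2)) := by
    rw [← Finset.mul_sum, sum_geom_Icc n (by omega) _ hxne]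
    have hxn : (0:ℝ) ≤ (q ^ 2) ^ n := by positivity
    have : (q ^ 2 - (q ^ 2) ^ n) / (1 - q ^ 2) ≤ q ^ 2 / (1 - q ^ 2) := by
      have hxn : (0:ℝ) ≤ (q ^ 2) ^ n := by positivity
      gcongr
      linarith
    linarith
  have e2 : ∑ _k ∈ Finset.Icc 1 (n - 1), 8 * q ^ n ≤ 8 * n * q ^ n := by
    rw [Finset.sum_const, Nat.card_Icc]
    have hcard : ((n - 1 + 1 - 1 : ℕ) : ℝ) ≤ (n : ℝ) := by
      have : (n - 1 + 1 - 1 : ℕ) ≤ n := by omega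
      exact_mod_cast this
    have hqn : (0:ℝ) ≤ q ^ n := by positivity
    rw [nsmul_eq_mul]
    nlinarith
  have e3 : ∑ k ∈ Finset.Icc 1 (n - 1), 4 * (((n - k : ℕ) : ℝ) / n) * (q ^ 2) ^ (n - k) ≤
      (4 / n) * (q ^ 2 / (1 - q ^ 2) ^ 2) := by
    have hrw : ∀ k ∈ Finset.Icc 1 (n-1), 4 * (((n - k : ℕ) : ℝ) / n) * (q ^ 2) ^ (n - k) =
        (4 / n) * (((n - k : ℕ) : ℝ) * (q ^ 2) ^ (n - k)) := by
      intro k _; ring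
    rw [Finset.sum_congr rfl hrw, ← Finset.mul_sum,
      sum_reflect_Icc n (fun j => ((j : ℕ) : ℝ) * (q ^ 2) ^ j)]
    have h4 : (0:ℝ) ≤ 4 / n := by positivity
    exact mul_le_mul_of_nonneg_left (sum_kgeom_le _ _ hx0 hx1) h4
  linarith


set_option maxHeartbeats 1000000 in
/-- if `ℓ_n ≥ 1`, `ℓ_n → ∞` and `ℓ_n (log n)/n → 0`, then the stationary
bootstrap normalizer `A_n = ∑_{k=1}^{n-1} (2 q_{k,n})² (1 - k/n)²`, with `q = 1 - 1/ℓ_n`,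
satisfies `A_n / ℓ_n → 2`. -/
theorem sb_normalizer_limit (ℓ : ℕ → ℝ) (hℓ1 : ∀ n, 1 ≤ ℓ n)
    (hℓ : Tendsto ℓ atTop atTop)
    (hA3 : Tendsto (fun n : ℕ => ℓ n * Real.log n / (n : ℝ)) atTop (nhds 0)) :
    Tendsto (fun n : ℕ =>
        (∑ k ∈ Finset.Icc 1 (n - 1),
          (2 * sbWeight n (1 - 1 / ℓ n) k) ^ 2 * (1 - (k : ℝ) / (n : ℝ)) ^ 2) / ℓ n)
      atTop (nhds 2) := by
  have hℓpos : ∀ n, 0 < ℓ n := fun n => lt_of_lt_of_le one_pos (hℓ1 n)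
  -- ℓ n / n → 0
  have hln : Tendsto (fun n : ℕ => ℓ n / n) atTop (𝓝 0) := by
    apply squeeze_zero' (g := fun n : ℕ => ℓ n * Real.log n / (n : ℝ)) ?_ ?_ hA3
    · filter_upwards [eventually_ge_atTop 1] with n hn
      exact div_nonneg (hℓpos n).le (Nat.cast_nonneg n)
    · filter_upwards [eventually_ge_atTop 3] with n hn
      have hn0 : (0:ℝ) < n := by positivity
      have hn3 : (3:ℝ) ≤ n := by exact_mod_cast hn
      have hlog : 1 ≤ Real.log n := by
        rw [Real.le_log_iff_exp_le hn0]
        calc Real.exp 1 ≤ 2.7182818286 := Real.exp_one_lt_d9.le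
          _ ≤ (3:ℝ) := by norm_num
          _ ≤ n := hn3
      have : ℓ n ≤ ℓ n * Real.log n := by nlinarith [hℓpos n]
      exact div_le_div_of_nonneg_right this hn0.le
  -- n / ℓ n → ∞
  have ht : Tendsto (fun n : ℕ => (n : ℝ) / ℓ n) atTop atTop := by
    have h1 : Tendsto (fun n : ℕ => ℓ n / n) atTop (𝓝[>] 0) := by
      rw [tendsto_nhdsWithin_iff]
      refine ⟨hln, ?_⟩
      filter_upwards [eventually_ge_atTop 1] with n hn
      have hn0 : (0:ℝ) < n := by positivity
      exact div_pos (hℓpos n) hn0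
    exact h1.inv_tendsto_nhdsGT_zero.congr fun n => by rw [Pi.inv_apply, inv_div]
  -- limit of main term c
  have hinv : Tendsto (fun n : ℕ => 1 / ℓ n) atTop (𝓝 0) := by
    simp only [one_div]; exact hℓ.inv_tendsto_atTop
  have hq : Tendsto (fun n : ℕ => 1 - 1 / ℓ n) atTop (𝓝 1) := by
    have := (tendsto_const_nhds (x := (1:ℝ)) (f := atTop)).sub hinv
    simpa using this
  have hc : Tendsto (fun n : ℕ => 4 * (1 - 1 / ℓ n) ^ 2 / (1 + (1 - 1 / ℓ n))) atTop (𝓝 2) := by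
    have hnum : Tendsto (fun n : ℕ => 4 * (1 - 1 / ℓ n) ^ 2) atTop (𝓝 4) := by
      have h0 := (hq.pow 2).const_mul (4:ℝ)
      rw [show (4:ℝ) * 1 ^ 2 = 4 from by norm_num] at h0
      exact h0
    have hden : Tendsto (fun n : ℕ => 1 + (1 - 1 / ℓ n)) atTop (𝓝 2) := by
      have h0 := (tendsto_const_nhds (x := (1:ℝ)) (f := atTop)).add hq
      rw [show (1:ℝ) + 1 = 2 from by norm_num] at h0
      exact h0
    have h := hnum.div hden (by norm_num)
    have h42 : (4:ℝ)/2 = 2 := by norm_num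
    rw [h42] at h
    exact h.congr fun n => rfl
  -- error bound g → 0
  have e1 : Tendsto (fun n : ℕ => Real.exp (-((n:ℝ) / ℓ n))) atTop (𝓝 0) :=
    Real.tendsto_exp_neg_atTop_nhds_zero.comp ht
  have e2 : Tendsto (fun n : ℕ => ((n:ℝ) / ℓ n) * Real.exp (-((n:ℝ) / ℓ n))) atTop (𝓝 0) := by
    have := (Real.tendsto_pow_mul_exp_neg_atTop_nhds_zero 1).comp ht
    simpa [pow_one, Function.comp_def] using this
  have hg : Tendsto (fun n : ℕ => 4 * Real.exp (-((n:ℝ) / ℓ n))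
      + 8 * (((n:ℝ) / ℓ n) * Real.exp (-((n:ℝ) / ℓ n))) + 16 * (ℓ n / n)) atTop (𝓝 0) := by
    have := ((e1.const_mul 4).add (e2.const_mul 8)).add (hln.const_mul 16)
    norm_num at this
    exact this
  -- difference tends to zero
  have hdiff : Tendsto (fun n : ℕ =>
      (∑ k ∈ Finset.Icc 1 (n - 1),
          (2 * sbWeight n (1 - 1 / ℓ n) k) ^ 2 * (1 - (k : ℝ) / (n : ℝ)) ^ 2) / ℓ n
        - 4 * (1 - 1 / ℓ n) ^ 2 / (1 + (1 - 1 / ℓ n))) atTop (𝓝 0) := by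
    apply squeeze_zero_norm' ?_ hg
    filter_upwards [eventually_ge_atTop 2] with n hn2
    set q : ℝ := 1 - 1 / ℓ n with hq_def
    have hl : (0:ℝ) < ℓ n := hℓpos n
    have hlne : ℓ n ≠ 0 := ne_of_gt hl
    have hl1 : 1 ≤ ℓ n := hℓ1 n
    have hn0 : (0:ℝ) < n := by positivity
    have hu0 : 0 < 1 / ℓ n := by positivity
    have hu1 : 1 / ℓ n ≤ 1 := by rw [div_le_one hl]; exact hl1
    have hq0 : 0 ≤ q := by rw [hq_def]; linarith
    have hq1 : q < 1 := by rw [hq_def]; linarith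
    have hSl := S_lower n hn2 q hq0 hq1
    have hSu := S_upper n hn2 q hq0 hq1
    set x : ℝ := q ^ 2 with hx_def
    set S : ℝ := ∑ k ∈ Finset.Icc 1 (n - 1),
        (2 * sbWeight n q k) ^ 2 * (1 - (k : ℝ) / (n : ℝ)) ^ 2 with hS_def
    have hx0 : 0 ≤ x := by rw [hx_def]; positivity
    have hx1 : x < 1 := by rw [hx_def]; nlinarith
    have hxq : x ≤ q := by rw [hx_def]; nlinarith
    have h1xpos : 0 < 1 - x := by linarith
    have hge1 : 1 ≤ ℓ n * (1 - x) := by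
      rw [hx_def, hq_def]
      have expand : ℓ n * (1 - (1 - 1/ℓ n)^2) = 2 - 1/ℓ n := by
        field_simp; ring
      rw [expand]; linarith
    have hX : x / (1 - x) ^ 2 ≤ ℓ n ^ 2 := by
      rw [div_le_iff₀ (by positivity)]
      nlinarith [mul_self_nonneg (ℓ n * (1 - x) - 1)]
    have hE : q ^ n ≤ Real.exp (-((n:ℝ) / ℓ n)) := by
      have h1 : q ≤ Real.exp (-(1 / ℓ n)) := by
        have := Real.add_one_le_exp (-(1 / ℓ n))
        rw [hq_def]; linarith
      calc q ^ n ≤ (Real.exp (-(1 / ℓ n))) ^ n := pow_le_pow_left₀ hq0 h1 n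
        _ = Real.exp (-((n:ℝ) / ℓ n)) := by
            rw [← Real.exp_nat_mul]; congr 1
            rw [mul_neg, mul_one_div]
    have hxE : x ^ n ≤ Real.exp (-((n:ℝ) / ℓ n)) :=
      le_trans (pow_le_pow_left₀ hx0 hxq n) hE
    have hlx : (1 - x) * ℓ n = 1 + q := by
      rw [hx_def, hq_def]; field_simp; ring
    have h1q : (0:ℝ) < 1 + q := by linarith
    have hcl : (4 * x / (1 + q)) * ℓ n = 4 * (x / (1 - x)) := by
      rw [show x / (1 - x) = x * ℓ n / ((1 - x) * ℓ n) from (mul_div_mul_right _ _ hlne).symm,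
        hlx]
      field_simp
    set g : ℝ := 4 * Real.exp (-((n:ℝ) / ℓ n))
        + 8 * (((n:ℝ) / ℓ n) * Real.exp (-((n:ℝ) / ℓ n))) + 16 * (ℓ n / n) with hg_def
    set c : ℝ := 4 * x / (1 + q) with hc_def
    have hgexp : g * ℓ n = 4 * Real.exp (-((n:ℝ) / ℓ n)) * ℓ n
        + 8 * (((n:ℝ) / ℓ n) * Real.exp (-((n:ℝ) / ℓ n))) * ℓ n
        + 16 * (ℓ n / n) * ℓ n := by rw [hg_def]; ring
    have hb2 : (16 / (n:ℝ)) * (x / (1 - x) ^ 2) ≤ 16 * (ℓ n / n) * ℓ n := by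
      have h1 : (16 / (n:ℝ)) * (x / (1 - x) ^ 2) ≤ (16 / n) * ℓ n ^ 2 :=
        mul_le_mul_of_nonneg_left hX (by positivity)
      have h2 : 16 * (ℓ n / n) * ℓ n = (16 / n) * ℓ n ^ 2 := by ring
      linarith [h2 ▸ h1]
    -- upper: S ≤ (c + g) ℓ
    have hupper : S ≤ (c + g) * ℓ n := by
      have t1 : 8 * (n:ℝ) * q ^ n ≤ 8 * (((n:ℝ) / ℓ n) * Real.exp (-((n:ℝ) / ℓ n))) * ℓ n := by
        have hrw : 8 * (((n:ℝ) / ℓ n) * Real.exp (-((n:ℝ) / ℓ n))) * ℓ n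
            = 8 * (n:ℝ) * Real.exp (-((n:ℝ) / ℓ n)) * (ℓ n / ℓ n) := by ring
        rw [hrw, div_self hlne, mul_one]
        nlinarith [hE, hn0]
      have hXx : 0 ≤ x / (1 - x) ^ 2 := by positivity
      have t2 : (4 / (n:ℝ)) * (x / (1 - x) ^ 2) ≤ (16 / (n:ℝ)) * (x / (1 - x) ^ 2) :=
        mul_le_mul_of_nonneg_right
          (div_le_div_of_nonneg_right (by norm_num : (4:ℝ) ≤ 16) hn0.le) hXx
      have t3 : (0:ℝ) ≤ 4 * Real.exp (-((n:ℝ) / ℓ n)) * ℓ n := by positivity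
      calc S ≤ 4 * (x / (1 - x)) + 8 * n * q ^ n + (4 / n) * (x / (1 - x) ^ 2) := hSu
        _ ≤ c * ℓ n + g * ℓ n := by rw [hcl, hgexp]; linarith [t1, t2, t3, hb2]
        _ = (c + g) * ℓ n := by ring
    -- lower: (c - g) ℓ ≤ S
    have hlower : (c - g) * ℓ n ≤ S := by
      have b1 : 4 * (x ^ n / (1 - x)) ≤ 4 * Real.exp (-((n:ℝ) / ℓ n)) * ℓ n := by
        have h1 : x ^ n / (1 - x) ≤ x ^ n * ℓ n := by
          rw [div_le_iff₀ h1xpos]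
          nlinarith [pow_nonneg hx0 n, hge1]
        have h2 : x ^ n * ℓ n ≤ Real.exp (-((n:ℝ) / ℓ n)) * ℓ n :=
          mul_le_mul_of_nonneg_right hxE hl.le
        linarith
      have b3 : (0:ℝ) ≤ 8 * (((n:ℝ) / ℓ n) * Real.exp (-((n:ℝ) / ℓ n))) * ℓ n := by positivity
      have hsplit : 4 * ((x - x ^ n) / (1 - x)) = 4 * (x / (1 - x)) - 4 * (x ^ n / (1 - x)) := by
        rw [sub_div]; ring
      have key : c * ℓ n - g * ℓ n ≤ 4 * ((x - x ^ n) / (1 - x)) - (16 / n) * (x / (1 - x) ^ 2) := by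
        rw [hsplit, hc_def, hcl, hgexp]
        linarith
      calc (c - g) * ℓ n = c * ℓ n - g * ℓ n := by ring
        _ ≤ 4 * ((x - x ^ n) / (1 - x)) - (16 / n) * (x / (1 - x) ^ 2) := key
        _ ≤ S := hSl
    rw [Real.norm_eq_abs, abs_le]
    constructor
    · have h := (le_div_iff₀ hl).mpr hlower
      linarith
    · have h := (div_le_iff₀ hl).mpr hupper
      linarith
  have final := hc.add hdiff
  rw [add_zero] at final
  exact final.congr fun n => by ring
end

section
/- For every n ≥ 2 and every q ∈ (0,1), the stationary bootstrap weights q_{k,n} = (1 − k/n)q^k + (k/n)q^{n−k}, 1 ≤ k ≤ n−1, satisfy ∑_{k=2}^{n−1} |q_{k,n} − q_{k−1,n}| ≤ 2. -/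
/-- for every `n ≥ 2` and `q ∈ (0,1)`, the stationary bootstrap weights have
total variation `∑_{k=2}^{n-1} |q_{k,n} - q_{k-1,n}| ≤ 2`. -/
theorem sb_weights_bounded_variation (n : ℕ) (hn : 2 ≤ n) (q : ℝ) (hq0 : 0 < q) (hq1 : q < 1) :
    (∑ k ∈ Finset.Icc 2 (n - 1), |sbWeight n q k - sbWeight n q (k - 1)|) ≤ 2 := by
  have hn0 : (0:ℝ) < (n:ℝ) := by positivity
  set a : ℕ → ℝ := fun j => (1 - (j : ℝ) / (n : ℝ)) * q ^ j with ha
  set b : ℕ → ℝ := fun j => ((j : ℝ) / (n : ℝ)) * q ^ (n - j) with hb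
  have hf : ∀ j, sbWeight n q j = a j + b j := fun j => rfl
  -- monotonicity facts
  have ha_mono : ∀ j, j + 1 ≤ n → a (j + 1) ≤ a j := by
    intro j hj
    have h1 : (0:ℝ) ≤ 1 - ((j:ℝ)+1) / n := by
      rw [sub_nonneg, div_le_one hn0]
      exact_mod_cast hj
    have h2 : (1:ℝ) - ((j:ℝ)+1)/n ≤ 1 - (j:ℝ)/n := by
      gcongr
      linarith
    have h3 : q ^ (j+1) ≤ q ^ j := pow_le_pow_of_le_one hq0.le hq1.le (by omega)
    simp only [ha, Nat.cast_add, Nat.cast_one]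
    exact mul_le_mul h2 h3 (by positivity) (by linarith)
  have hb_mono : ∀ j, j + 1 ≤ n → b j ≤ b (j + 1) := by
    intro j hj
    have h2 : ((j:ℝ))/n ≤ ((j:ℝ)+1)/n := by gcongr; linarith
    have h3 : q ^ (n - j) ≤ q ^ (n - (j+1)) := pow_le_pow_of_le_one hq0.le hq1.le (by omega)
    simp only [hb, Nat.cast_add, Nat.cast_one]
    exact mul_le_mul h2 h3 (by positivity) (by positivity)
  -- rewrite sum over a range
  have hIcc : Finset.Icc 2 (n - 1) = (Finset.range (n - 2)).image (fun i => i + 2) := by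
    ext k
    simp only [Finset.mem_Icc, Finset.mem_image, Finset.mem_range]
    constructor
    · intro ⟨h1, h2⟩; exact ⟨k - 2, by omega, by omega⟩
    · rintro ⟨i, hi, rfl⟩; omega
  rw [hIcc, Finset.sum_image (by intro x _ y _ h; simp only at h; omega)]
  have key : ∀ i ∈ Finset.range (n - 2),
      |sbWeight n q (i + 2) - sbWeight n q (i + 2 - 1)| ≤
        (a (i + 1) - a (i + 2)) + (b (i + 2) - b (i + 1)) := by
    intro i hi
    simp only [Finset.mem_range] at hi
    have h1 : i + 2 ≤ n := by omega
    have h2 : i + 2 - 1 = i + 1 := by omega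
    rw [h2, hf, hf]
    have hA := ha_mono (i + 1) h1
    have hB := hb_mono (i + 1) h1
    rw [abs_le]
    constructor <;> [linarith; linarith]
  have t1 : (∑ i ∈ Finset.range (n - 2), (a (i + 1) - a (i + 2))) = a 1 - a (n - 1) := by
    have h := Finset.sum_range_sub' (f := fun j => a (j + 1)) (n := n - 2)
    have he : n - 2 + 1 = n - 1 := by omega
    rw [← he]
    convert h using 2 with i
  have t2 : (∑ i ∈ Finset.range (n - 2), (b (i + 2) - b (i + 1))) = b (n - 1) - b 1 := by
    have h := Finset.sum_range_sub (f := fun j => b (j + 1)) (n := n - 2)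
    have he : n - 2 + 1 = n - 1 := by omega
    rw [← he]
    convert h using 2 with i
  calc (∑ i ∈ Finset.range (n - 2), |sbWeight n q (i + 2) - sbWeight n q (i + 2 - 1)|)
      ≤ ∑ i ∈ Finset.range (n - 2), ((a (i + 1) - a (i + 2)) + (b (i + 2) - b (i + 1))) :=
        Finset.sum_le_sum key
    _ = (a 1 - a (n - 1)) + (b (n - 1) - b 1) := by
        rw [Finset.sum_add_distrib, t1, t2]
    _ ≤ 2 := by
        have ha1 : a 1 ≤ 1 := by
          simp only [ha, pow_one, Nat.cast_one]
          have h0 : (0:ℝ) ≤ 1/(n:ℝ) := by positivity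
          have h1 : (0:ℝ) ≤ 1 - 1/(n:ℝ) := by
            rw [sub_nonneg, div_le_one hn0]
            exact_mod_cast (by omega : 1 ≤ n)
          nlinarith
        have han : 0 ≤ a (n - 1) := by
          simp only [ha]
          have hc : ((n - 1 : ℕ) : ℝ) = (n:ℝ) - 1 := by
            rw [Nat.cast_sub (by omega)]; simp
          rw [hc]
          have h1 : ((n:ℝ) - 1) / n ≤ 1 := by
            rw [div_le_one hn0]; linarith
          have : (0:ℝ) ≤ 1 - ((n:ℝ)-1)/n := by linarith
          positivity
        have hb1 : 0 ≤ b 1 := by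
          simp only [hb]; positivity
        have hbn : b (n - 1) ≤ 1 := by
          simp only [hb]
          have h1 : n - (n - 1) = 1 := by omega
          rw [h1, pow_one]
          have hc : ((n - 1 : ℕ) : ℝ) = (n:ℝ) - 1 := by
            rw [Nat.cast_sub (by omega)]; simp
          rw [hc]
          have h2 : ((n:ℝ) - 1)/n ≤ 1 := by
            rw [div_le_one hn0]; linarith
          have h3 : (0:ℝ) ≤ ((n:ℝ)-1)/n := by
            apply div_nonneg _ hn0.le
            have : (1:ℝ) ≤ n := by exact_mod_cast (by omega : 1 ≤ n)
            linarith
          nlinarith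
        linarith
end
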